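/- arXiv:math/0503728 — 8 statements merged into one kernel-verified Lean document; each statement's English description precedes it below -/
import Mathlib

section
/- Let w : ℕ → (0,∞) be a weight function satisfying condition (M), with Malthusian parameter λ*, and suppose in addition that w(n) → ∞ as n → ∞. Let (X_i)_{i≥0} be independent random variables with X_i exponentially distributed with rate w(i), and set σ_k = X_0 + ⋯ + X_{k−1} for k ≥ 1. Then E[(Σ_{k=1}^∞ e^{−λ* σ_k})²] < ∞; in particular E[ξ̂(λ*) log⁺ ξ̂(λ*)] < ∞, where ξ̂(λ*) = Σ_{k=1}^∞ e^{−λ* σ_k} (condition (L)). -/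
open scoped Classical BigOperators ENNReal

/-- Vertices of rooted ordered trees: finite sequences of positive integers,
encoded as lists of natural numbers (entries are forced to be `≥ 1` by the
tree property below). -/
abbrev Vertex : Type := List ℕ

/-- `G` is a rooted ordered tree: it contains the root `[]` and, together with
any vertex `x = (x₁,…,x_k) ≠ ∅` (whose last entry is positive), it contains
the parent `(x₁,…,x_{k−1})` and, if `x_k > 1`, also `(x₁,…,x_{k−1},x_k−1)`. -/
def IsROTree (G : Finset Vertex) : Prop :=
  ([] : Vertex) ∈ G ∧
    ∀ y ∈ G, y ≠ ([] : Vertex) →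
      1 ≤ y.getLastD 0 ∧ y.dropLast ∈ G ∧
        (1 < y.getLastD 0 → y.dropLast ++ [y.getLastD 0 - 1] ∈ G)

/-- `deg(x,G)`: the number of children of `x` in `G`. -/
def degree (x : Vertex) (G : Finset Vertex) : ℕ :=
  (G.filter fun y => y ≠ ([] : Vertex) ∧ y.dropLast = x).card

/-- the subtree of `G` rooted at `x`, i.e. `{y : x · y ∈ G}` -/
def subtreeAt (G : Finset Vertex) (x : Vertex) : Finset Vertex :=
  (G.filter fun z => x <+: z).image fun z => z.drop x.length

/-- the total weight `W(G) = Σ_{y∈G} w(deg(y,G))` -/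
noncomputable def totalWeight (w : ℕ → ℝ) (G : Finset Vertex) : ℝ :=
  ∑ x ∈ G, w (degree x G)

/-- the Laplace transform `ρ̂(λ) = Σ_{k≥1} Π_{i=0}^{k−1} w(i)/(λ+w(i)) ∈ (0,∞]` -/
noncomputable def lapRho (w : ℕ → ℝ) (lam : ℝ) : ℝ≥0∞ :=
  ∑' k : ℕ, ∏ i ∈ Finset.range (k + 1), ENNReal.ofReal (w i / (lam + w i))

/-- `λ̲ = inf {λ > 0 : ρ̂(λ) < ∞}` -/
noncomputable def lowerLam (w : ℕ → ℝ) : ℝ :=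
  sInf {lam : ℝ | 0 < lam ∧ lapRho w lam ≠ ∞}

/-- Condition (M): `λ̲ < ∞` (i.e. `ρ̂` is somewhere finite) and
`lim_{λ↓λ̲} ρ̂(λ) > 1`; since `ρ̂` is nonincreasing, the right limit at `λ̲`
equals the supremum over `λ > λ̲`. -/
def CondM (w : ℕ → ℝ) : Prop :=
  {lam : ℝ | 0 < lam ∧ lapRho w lam ≠ ∞}.Nonempty ∧
    1 < ⨆ lam ∈ Set.Ioi (lowerLam w), lapRho w lam

/-- the set `HIST(G)` of historical orderings of `G` -/
def Hist (G : Finset Vertex) : Set (List Vertex) :=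
  {s : List Vertex | s.Nodup ∧ s.toFinset = G ∧
    ∀ i < s.length, IsROTree (s.take (i + 1)).toFinset}

/-- `W(G,s,i)`, the total weight of `G(s,i) = {s₀,…,s_i}` -/
noncomputable def histW (w : ℕ → ℝ) (s : List Vertex) (i : ℕ) : ℝ :=
  totalWeight w (s.take (i + 1)).toFinset

/-- `w(G,s,i) = w(deg(parent of s_i, G(s,i−1)))`, for `1 ≤ i ≤ |G|−1` -/
noncomputable def histw (w : ℕ → ℝ) (s : List Vertex) (i : ℕ) : ℝ :=
  w (degree (s.getD i []).dropLast (s.take i).toFinset)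

/-- the asymptotic degree distribution `p_w(k)` (with Malthusian parameter `lam`) -/
noncomputable def pW (w : ℕ → ℝ) (lam : ℝ) (k : ℕ) : ℝ :=
  lam / (lam + w k) * ∏ i ∈ Finset.range k, w i / (lam + w i)

/-- the asymptotic subtree distribution `π_w(G)` (with Malthusian parameter `lam`) -/
noncomputable def piW (w : ℕ → ℝ) (lam : ℝ) (G : Finset Vertex) : ℝ :=
  ∑ᶠ s ∈ Hist G,
    lam / (lam + totalWeight w G) *
      ∏ i ∈ Finset.range (G.card - 1), histw w s (i + 1) / (lam + histW w s i)

section CondLAuxSec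

open scoped ENNReal
open MeasureTheory ProbabilityTheory Real Set Filter

namespace CondLAux

/-- exponential distribution as a density measure -/
noncomputable def em (r : ℝ) : Measure ℝ :=
  (volume.restrict (Ioi (0:ℝ))).withDensity fun x => ENNReal.ofReal (r * Real.exp (-(r * x)))

lemma integral_exp_Ioi {b : ℝ} (hb : 0 < b) (s : ℝ) :
    ∫ x in Ioi s, Real.exp (-(b * x)) = Real.exp (-(b * s)) / b := by
  have h := integral_comp_mul_left_Ioi (fun y => Real.exp (-y)) s hb
  simp only [integral_exp_neg_Ioi, smul_eq_mul] at h
  rw [h, inv_mul_eq_div]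

lemma integrableOn_exp_Ioi {b : ℝ} (hb : 0 < b) (s : ℝ) :
    IntegrableOn (fun x => Real.exp (-(b * x))) (Ioi s) := by
  simpa only [neg_mul] using exp_neg_integrableOn_Ioi s hb

lemma em_Ioi {r : ℝ} (hr : 0 < r) (t : ℝ) :
    em r (Ioi t) = ENNReal.ofReal (Real.exp (-(r * max t 0))) := by
  rw [em, withDensity_apply _ measurableSet_Ioi,
    Measure.restrict_restrict measurableSet_Ioi]
  have hI : Ioi t ∩ Ioi (0:ℝ) = Ioi (max t 0) := by
    ext x; simp [max_lt_iff]
  rw [hI, ← ofReal_integral_eq_lintegral_ofReal]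
  · rw [MeasureTheory.integral_const_mul, integral_exp_Ioi hr, mul_div_cancel₀ _ hr.ne']
  · exact ((integrableOn_exp_Ioi hr _).const_mul r)
  · filter_upwards with x using by positivity

lemma em_univ {r : ℝ} (hr : 0 < r) : em r univ = 1 := by
  have h0 := em_Ioi hr 0
  have hc : em r (Iic (0:ℝ)) = 0 := by
    rw [em, withDensity_apply _ measurableSet_Iic,
      Measure.restrict_restrict measurableSet_Iic]
    have : Iic (0:ℝ) ∩ Ioi 0 = ∅ := by
      ext x; simp only [mem_inter_iff, mem_Iic, mem_Ioi, mem_empty_iff_false, iff_false, not_and]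
      intro h1 h2; linarith
    simp [this]
  have := measure_add_measure_compl (μ := em r) (s := Iic (0:ℝ)) measurableSet_Iic
  rw [hc, zero_add, compl_Iic] at this
  rw [← this, h0]
  norm_num

lemma em_prob {r : ℝ} (hr : 0 < r) : IsProbabilityMeasure (em r) := ⟨em_univ hr⟩

lemma lint_em {r c : ℝ} (hr : 0 < r) (hc : 0 ≤ c) :
    ∫⁻ x, ENNReal.ofReal (Real.exp (-(c * x))) ∂(em r) = ENNReal.ofReal (r / (c + r)) := by
  have hcr : 0 < c + r := by linarith
  have hm1 : Measurable fun x : ℝ => ENNReal.ofReal (r * Real.exp (-(r * x))) :=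
    ((Real.measurable_exp.comp ((measurable_id.const_mul r).neg)).const_mul r).ennreal_ofReal
  have hm2 : Measurable fun x : ℝ => ENNReal.ofReal (Real.exp (-(c * x))) :=
    (Real.measurable_exp.comp ((measurable_id.const_mul c).neg)).ennreal_ofReal
  rw [em, lintegral_withDensity_eq_lintegral_mul _ hm1 hm2]
  have hpt : ∀ x : ℝ,
      ((fun x => ENNReal.ofReal (r * Real.exp (-(r * x)))) *
        fun x => ENNReal.ofReal (Real.exp (-(c * x)))) x
      = ENNReal.ofReal (r * Real.exp (-((c + r) * x))) := by
    intro x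
    simp only [Pi.mul_apply]
    rw [← ENNReal.ofReal_mul (by positivity)]
    congr 1
    rw [mul_assoc, ← Real.exp_add]
    congr 2
    ring
  rw [lintegral_congr hpt, ← ofReal_integral_eq_lintegral_ofReal]
  · rw [MeasureTheory.integral_const_mul, integral_exp_Ioi hcr, mul_zero, neg_zero, Real.exp_zero]
    congr 1
    field_simp
  · exact (integrableOn_exp_Ioi hcr _).const_mul r
  · filter_upwards with x using by positivity

lemma map_eq {Ω : Type} [MeasurableSpace Ω] (P : Measure Ω) [IsProbabilityMeasure P]
    {X : Ω → ℝ} (hX : Measurable X) {r : ℝ} (hr : 0 < r)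
    (h : ∀ t, 0 ≤ t → P {ω | t < X ω} = ENNReal.ofReal (Real.exp (-(r * t)))) :
    P.map X = em r := by
  have hmap : IsProbabilityMeasure (P.map X) := Measure.isProbabilityMeasure_map hX.aemeasurable
  have hem : IsProbabilityMeasure (em r) := em_prob hr
  have hIoi : ∀ t, P.map X (Ioi t) = em r (Ioi t) := by
    intro t
    rw [Measure.map_apply hX measurableSet_Ioi, em_Ioi hr]
    rcases le_or_gt 0 t with ht | ht
    · rw [max_eq_left ht]; exact h t ht
    · rw [max_eq_right ht.le, mul_zero, neg_zero, Real.exp_zero, ENNReal.ofReal_one]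
      have h0 := h 0 le_rfl
      rw [mul_zero, neg_zero, Real.exp_zero, ENNReal.ofReal_one] at h0
      refine le_antisymm prob_le_one ?_
      rw [← h0]
      exact measure_mono fun ω hω => lt_trans ht hω
  refine Measure.ext_of_Iic (P.map X) (em r) fun a => ?_
  rw [← compl_Ioi, prob_compl_eq_one_sub measurableSet_Ioi,
    prob_compl_eq_one_sub measurableSet_Ioi, hIoi a]

lemma single_lint {Ω : Type} [MeasurableSpace Ω] (P : Measure Ω) [IsProbabilityMeasure P]
    {X : Ω → ℝ} (hX : Measurable X) {r : ℝ} (hr : 0 < r)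
    (h : ∀ t, 0 ≤ t → P {ω | t < X ω} = ENNReal.ofReal (Real.exp (-(r * t))))
    {c : ℝ} (hc : 0 ≤ c) :
    ∫⁻ ω, ENNReal.ofReal (Real.exp (-(c * X ω))) ∂P = ENNReal.ofReal (r / (c + r)) := by
  have hmap := map_eq P hX hr h
  have hgm : Measurable fun x : ℝ => ENNReal.ofReal (Real.exp (-(c * x))) :=
    (Real.measurable_exp.comp ((measurable_id.const_mul c).neg)).ennreal_ofReal
  rw [← lint_em hr hc, ← hmap, lintegral_map hgm hX]

lemma prod_lint {Ω : Type} [MeasurableSpace Ω] (P : Measure Ω) [IsProbabilityMeasure P]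
    (w : ℕ → ℝ) (hw : ∀ n, 0 < w n)
    (X : ℕ → Ω → ℝ) (hmeas : ∀ i, Measurable (X i))
    (hindep : iIndepFun X P)
    (hexp : ∀ (i : ℕ) (t : ℝ), 0 ≤ t →
      P {ω | t < X i ω} = ENNReal.ofReal (Real.exp (-(w i * t))))
    (c : ℕ → ℝ) (hc : ∀ i, 0 ≤ c i) (n : ℕ) :
    ∫⁻ ω, ∏ i ∈ Finset.range n, ENNReal.ofReal (Real.exp (-(c i * X i ω))) ∂P
      = ∏ i ∈ Finset.range n, ENNReal.ofReal (w i / (c i + w i)) := by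
  set F : ℕ → Ω → ℝ≥0∞ := fun i ω => ENNReal.ofReal (Real.exp (-(c i * X i ω))) with hF
  have hFmeas : ∀ i, Measurable (F i) := by
    intro i
    apply Measurable.ennreal_ofReal
    exact (Real.measurable_exp.comp ((hmeas i).const_mul (c i)).neg)
  have hFindep : iIndepFun F P := by
    have := hindep.comp (fun i (x : ℝ) => ENNReal.ofReal (Real.exp (-(c i * x))))
      (fun i => (Real.measurable_exp.comp ((measurable_id.const_mul (c i)).neg)).ennreal_ofReal)
    exact this
  induction n with
  | zero => simp
  | succ n ih =>
    have hsplit : ∀ ω, ∏ i ∈ Finset.range (n+1), F i ω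
        = ((∏ j ∈ Finset.range n, F j) * F n) ω := by
      intro ω
      simp [Finset.prod_range_succ, Finset.prod_apply]
    have hpm : Measurable (∏ j ∈ Finset.range n, F j) := by
      rw [Finset.prod_fn]
      exact Finset.measurable_prod _ fun i _ => hFmeas i
    rw [lintegral_congr hsplit,
      lintegral_mul_eq_lintegral_mul_lintegral_of_indepFun hpm (hFmeas n)
        (hFindep.indepFun_prod_range_succ hFmeas n)]
    have h1 : ∫⁻ ω, (∏ j ∈ Finset.range n, F j) ω ∂P
        = ∏ i ∈ Finset.range n, ENNReal.ofReal (w i / (c i + w i)) := by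
      rw [← ih]
      exact lintegral_congr fun ω => by simp [Finset.prod_apply, hF]
    rw [h1, single_lint P (hmeas n) (hw n) (hexp n) (hc n), Finset.prod_range_succ]

lemma lapRho_anti (w : ℕ → ℝ) (hw : ∀ n, 0 < w n) {a b : ℝ} (ha : 0 < a) (hab : a ≤ b) :
    lapRho w b ≤ lapRho w a := by
  refine ENNReal.tsum_le_tsum fun k => Finset.prod_le_prod' fun i _ => ?_
  apply ENNReal.ofReal_le_ofReal
  gcongr
  · exact (hw i).le
  · linarith [hw i]


lemma key_real (w : ℕ → ℝ) (hw : ∀ n, 0 < w n) {l L : ℝ} (hl : 0 < l) (hlL : l < L)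
    (hInf : Tendsto w atTop atTop) :
    ∃ C : ℝ, 0 ≤ C ∧ ∀ j k : ℕ, j ≤ k →
      (∏ i ∈ Finset.range (k+1),
          (if i ≤ j then w i / (2*L + w i) else w i / (L + w i)))
        ≤ C * ((∏ i ∈ Finset.range (j+1), w i / (l + w i)) *
            ∏ i ∈ Finset.range (k+1), w i / (L + w i)) := by
  have hL : 0 < L := lt_trans hl hlL
  set a : ℕ → ℝ := fun i => w i / (L + w i) with ha
  set a' : ℕ → ℝ := fun i => w i / (l + w i) with ha'
  set b : ℕ → ℝ := fun i => w i / (2*L + w i) with hb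
  have hapos : ∀ i, 0 < a i := fun i => div_pos (hw i) (by linarith [hw i])
  have ha'pos : ∀ i, 0 < a' i := fun i => div_pos (hw i) (by linarith [hw i])
  have hbpos : ∀ i, 0 < b i := fun i => div_pos (hw i) (by linarith [hw i])
  have hale : ∀ i, a i ≤ 1 := fun i => by
    rw [ha, div_le_one (by linarith [hw i])]; linarith
  have ha'le : ∀ i, a' i ≤ 1 := fun i => by
    rw [ha', div_le_one (by linarith [hw i])]; linarith
  have hble : ∀ i, b i ≤ 1 := fun i => by
    rw [hb, div_le_one (by linarith [hw i])]; linarith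
  obtain ⟨N, hN⟩ : ∃ N, ∀ i ≥ N, L * l / (L - l) ≤ w i :=
    eventually_atTop.mp (hInf.eventually_ge_atTop _)
  have hba : ∀ i, N ≤ i → b i ≤ a i * a' i := by
    intro i hi
    have hwi := hw i
    have h1 : L * l ≤ (L - l) * w i := by
      have h2 := hN i hi
      rw [div_le_iff₀ (by linarith : (0:ℝ) < L - l)] at h2
      linarith [h2]
    rw [hb, ha, ha', div_mul_div_comm, div_le_div_iff₀ (by linarith) (by positivity)]
    nlinarith [hwi]
  set C : ℝ := ∏ i ∈ Finset.range N, (a i * a' i)⁻¹ with hC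
  have hCpos : 0 < C := Finset.prod_pos fun i _ => by
    have := hapos i; have := ha'pos i; positivity
  have claim1 : ∀ j : ℕ, ∏ i ∈ Finset.range j, b i
      ≤ (∏ i ∈ Finset.range (min j N), (a i * a' i)⁻¹) *
        ∏ i ∈ Finset.range j, (a i * a' i) := by
    intro j
    induction j with
    | zero => simp
    | succ j ih =>
      have hPinv : 0 ≤ ∏ i ∈ Finset.range (min j N), (a i * a' i)⁻¹ :=
        Finset.prod_nonneg fun i _ => by
          have := hapos i; have := ha'pos i; positivity
      have hPaa : 0 ≤ ∏ i ∈ Finset.range j, (a i * a' i) :=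
        Finset.prod_nonneg fun i _ => by
          have := hapos i; have := ha'pos i; positivity
      rcases le_or_gt N j with hj | hj
      · have hm1 : min (j+1) N = N := min_eq_right (by omega)
        have hm0 : min j N = N := min_eq_right hj
        rw [hm1, Finset.prod_range_succ, Finset.prod_range_succ
          (f := fun i => a i * a' i)]
        rw [hm0] at ih hPinv
        calc (∏ i ∈ Finset.range j, b i) * b j
            ≤ ((∏ i ∈ Finset.range N, (a i * a' i)⁻¹) *
                ∏ i ∈ Finset.range j, (a i * a' i)) * (a j * a' j) :=
              mul_le_mul ih (hba j hj) (hbpos j).le (mul_nonneg hPinv hPaa)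
          _ = (∏ i ∈ Finset.range N, (a i * a' i)⁻¹) *
                ((∏ i ∈ Finset.range j, (a i * a' i)) * (a j * a' j)) := by ring
      · have hm1 : min (j+1) N = j+1 := min_eq_left (by omega)
        have hm0 : min j N = j := min_eq_left (by omega)
        rw [hm1, Finset.prod_range_succ, Finset.prod_range_succ
          (f := fun i => a i * a' i), Finset.prod_range_succ
          (f := fun i => (a i * a' i)⁻¹)]
        rw [hm0] at ih hPinv
        have hinv : (a j * a' j)⁻¹ * (a j * a' j) = 1 := by
          have := hapos j; have := ha'pos j
          exact inv_mul_cancel₀ (by positivity)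
        calc (∏ i ∈ Finset.range j, b i) * b j
            ≤ ((∏ i ∈ Finset.range j, (a i * a' i)⁻¹) *
                ∏ i ∈ Finset.range j, (a i * a' i)) * 1 :=
              mul_le_mul ih (hble j) (hbpos j).le (mul_nonneg hPinv hPaa)
          _ = ((∏ i ∈ Finset.range j, (a i * a' i)⁻¹) * (a j * a' j)⁻¹) *
                ((∏ i ∈ Finset.range j, (a i * a' i)) * (a j * a' j)) := by
              rw [← hinv]; ring
  have claim2 : ∀ j : ℕ, ∏ i ∈ Finset.range (j+1), b i
      ≤ C * ∏ i ∈ Finset.range (j+1), (a i * a' i) := by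
    intro j
    refine le_trans (claim1 (j+1)) (mul_le_mul_of_nonneg_right ?_
      (Finset.prod_nonneg fun i _ => by
        have := hapos i; have := ha'pos i; positivity))
    have hmle : min (j+1) N ≤ N := min_le_right _ _
    rw [hC, ← Finset.prod_range_mul_prod_Ico _ hmle]
    refine le_mul_of_one_le_right (Finset.prod_nonneg fun i _ => by
      have := hapos i; have := ha'pos i; positivity) ?_
    calc (1:ℝ) = ∏ _i ∈ Finset.Ico (min (j+1) N) N, (1:ℝ) := by
          rw [Finset.prod_const_one]
      _ ≤ ∏ i ∈ Finset.Ico (min (j+1) N) N, (a i * a' i)⁻¹ := by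
          refine Finset.prod_le_prod (fun i _ => by norm_num) (fun i _ => ?_)
          rw [one_le_inv₀ (by have := hapos i; have := ha'pos i; positivity)]
          exact mul_le_one₀ (hale i) (ha'pos i).le (ha'le i)
  refine ⟨C, hCpos.le, fun j k hjk => ?_⟩
  have hsplitIf : (∏ i ∈ Finset.range (k+1), (if i ≤ j then b i else a i))
      = (∏ i ∈ Finset.range (j+1), b i) * ∏ i ∈ Finset.Ico (j+1) (k+1), a i := by
    rw [← Finset.prod_range_mul_prod_Ico _ (Nat.succ_le_succ hjk)]
    congr 1
    · exact Finset.prod_congr rfl fun i hi =>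
        if_pos (Nat.lt_succ_iff.mp (Finset.mem_range.mp hi))
    · refine Finset.prod_congr rfl fun i hi => if_neg ?_
      have := Finset.mem_Ico.mp hi
      omega
  have hIa : 0 ≤ ∏ i ∈ Finset.Ico (j+1) (k+1), a i :=
    Finset.prod_nonneg fun i _ => (hapos i).le
  calc (∏ i ∈ Finset.range (k+1), (if i ≤ j then b i else a i))
      = (∏ i ∈ Finset.range (j+1), b i) * ∏ i ∈ Finset.Ico (j+1) (k+1), a i := hsplitIf
    _ ≤ (C * ∏ i ∈ Finset.range (j+1), (a i * a' i)) *
          ∏ i ∈ Finset.Ico (j+1) (k+1), a i :=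
        mul_le_mul_of_nonneg_right (claim2 j) hIa
    _ = C * ((∏ i ∈ Finset.range (j+1), a' i) *
          ((∏ i ∈ Finset.range (j+1), a i) * ∏ i ∈ Finset.Ico (j+1) (k+1), a i)) := by
        rw [Finset.prod_mul_distrib]; ring
    _ = C * ((∏ i ∈ Finset.range (j+1), a' i) * ∏ i ∈ Finset.range (k+1), a i) := by
        rw [Finset.prod_range_mul_prod_Ico _ (Nat.succ_le_succ hjk)]


noncomputable def ArP (w : ℕ → ℝ) (lam : ℝ) (k : ℕ) : ℝ :=
  ∏ i ∈ Finset.range (k + 1), w i / (lam + w i)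

noncomputable def Gf {Ω : Type} (lam : ℝ) (X : ℕ → Ω → ℝ) (k : ℕ) (ω : Ω) : ℝ≥0∞ :=
  ENNReal.ofReal (Real.exp (-(lam * ∑ i ∈ Finset.range (k + 1), X i ω)))

lemma Gf_meas {Ω : Type} [MeasurableSpace Ω] (lam : ℝ) (X : ℕ → Ω → ℝ)
    (hmeas : ∀ i, Measurable (X i)) (k : ℕ) : Measurable (Gf lam X k) :=
  (Real.measurable_exp.comp
    ((Finset.measurable_sum _ fun i _ => hmeas i).const_mul lam).neg).ennreal_ofReal

end CondLAux

end CondLAuxSec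

open MeasureTheory ProbabilityTheory Filter in
/-- **Lemma (Section 7).**  If `w` satisfies condition (M) and `w(n) → ∞`,
then `E[ξ̂(λ*)²] < ∞`, where `ξ̂(λ*) = Σ_{k≥1} e^{−λ* σ_k}` and
`σ_k = X_0 + ⋯ + X_{k−1}` is a sum of independent exponentials of rates
`w(0),…,w(k−1)`; in particular condition (L), `E[ξ̂(λ*) log⁺ ξ̂(λ*)] < ∞`,
holds. -/
theorem condition_L (w : ℕ → ℝ) (hw : ∀ n, 0 < w n) (hM : CondM w)
    (lamStar : ℝ) (hroot : lowerLam w < lamStar ∧ lapRho w lamStar = 1)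
    (hInf : Tendsto w atTop atTop)
    (Ω : Type) [MeasurableSpace Ω] (P : Measure Ω) [IsProbabilityMeasure P]
    (X : ℕ → Ω → ℝ) (hmeas : ∀ i, Measurable (X i))
    (hindep : iIndepFun X P)
    (hexp : ∀ (i : ℕ) (t : ℝ), 0 ≤ t →
      P {ω | t < X i ω} = ENNReal.ofReal (Real.exp (-(w i * t)))) :
    (∫⁻ ω, ENNReal.ofReal
        ((∑' k : ℕ,
          Real.exp (-(lamStar * ∑ i ∈ Finset.range (k + 1), X i ω))) ^ 2) ∂P) < ∞ ∧
    (∫⁻ ω, ENNReal.ofReal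
        ((∑' k : ℕ, Real.exp (-(lamStar * ∑ i ∈ Finset.range (k + 1), X i ω))) *
          max (Real.log
            (∑' k : ℕ, Real.exp (-(lamStar * ∑ i ∈ Finset.range (k + 1), X i ω)))) 0) ∂P)
      < ∞ := by
  classical
  obtain ⟨hlow, hone⟩ := hroot
  have hlow0 : 0 ≤ lowerLam w := Real.sInf_nonneg fun x hx => hx.1.le
  have hL0 : 0 < lamStar := lt_of_le_of_lt hlow0 hlow
  obtain ⟨l, hl0, hlL, hlfin⟩ : ∃ l, 0 < l ∧ l < lamStar ∧ lapRho w l ≠ ∞ := by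
    refine ⟨(lowerLam w + lamStar) / 2, by linarith, by linarith, ?_⟩
    have hlt : lowerLam w < (lowerLam w + lamStar) / 2 := by linarith
    obtain ⟨m, hm, hml⟩ := (csInf_lt_iff ⟨0, fun x hx => hx.1.le⟩ hM.1).mp hlt
    intro htop
    have hmono := CondLAux.lapRho_anti w hw hm.1 hml.le
    rw [htop, top_le_iff] at hmono
    exact hm.2 hmono
  have hGmeas : ∀ k : ℕ, Measurable (CondLAux.Gf lamStar X k) :=
    CondLAux.Gf_meas lamStar X hmeas
  have hArnn : ∀ (lam : ℝ) (k : ℕ), 0 < lam → 0 ≤ CondLAux.ArP w lam k := fun lam k hlam =>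
    Finset.prod_nonneg fun i _ => div_nonneg (hw i).le (by linarith [hw i])
  have hlap : ∀ lam : ℝ, 0 < lam →
      lapRho w lam = ∑' k : ℕ, ENNReal.ofReal (CondLAux.ArP w lam k) := by
    intro lam hlam
    exact tsum_congr fun k =>
      (ENNReal.ofReal_prod_of_nonneg fun i _ =>
        div_nonneg (hw i).le (by linarith [hw i])).symm
  have hcross : ∀ j k : ℕ, j ≤ k →
      (∫⁻ ω, CondLAux.Gf lamStar X j ω * CondLAux.Gf lamStar X k ω ∂P)
      = ENNReal.ofReal (∏ i ∈ Finset.range (k + 1),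
          (if i ≤ j then w i / (2 * lamStar + w i) else w i / (lamStar + w i))) := by
    intro j k hjk
    set c : ℕ → ℝ := fun i => if i ≤ j then 2 * lamStar else lamStar with hc
    have hc0 : ∀ i, 0 ≤ c i := fun i => by
      rw [hc]; dsimp only; split_ifs <;> linarith
    have hpt : ∀ ω, CondLAux.Gf lamStar X j ω * CondLAux.Gf lamStar X k ω
        = ∏ i ∈ Finset.range (k + 1), ENNReal.ofReal (Real.exp (-(c i * X i ω))) := by
      intro ω
      rw [CondLAux.Gf, CondLAux.Gf, ← ENNReal.ofReal_mul (Real.exp_nonneg _), ← Real.exp_add,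
        ← ENNReal.ofReal_prod_of_nonneg (fun i _ => (Real.exp_nonneg _)), ← Real.exp_sum]
      congr 1
      have hsum : ∑ i ∈ Finset.range (k + 1), -(c i * X i ω)
          = -∑ i ∈ Finset.range (k + 1), c i * X i ω := by
        rw [← Finset.sum_neg_distrib]
      rw [hsum]
      have key : ∑ i ∈ Finset.range (k + 1), c i * X i ω
          = lamStar * (∑ i ∈ Finset.range (k + 1), X i ω) +
            lamStar * ∑ i ∈ Finset.range (j + 1), X i ω := by
        have h1 : ∀ i, c i * X i ω
            = lamStar * X i ω + (if i ≤ j then lamStar * X i ω else 0) := by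
          intro i; rw [hc]; dsimp only; split_ifs <;> ring
        rw [Finset.sum_congr rfl fun i _ => h1 i, Finset.sum_add_distrib, ← Finset.mul_sum]
        congr 1
        rw [← Finset.sum_subset (Finset.range_subset_range.mpr (Nat.succ_le_succ hjk))
          (fun x _ hx => if_neg fun hxj => hx (Finset.mem_range.mpr (Nat.lt_succ_of_le hxj))),
          Finset.sum_congr rfl fun i hi =>
            if_pos (Nat.lt_succ_iff.mp (Finset.mem_range.mp hi)),
          ← Finset.mul_sum]
      rw [key]; ring_nf
    rw [lintegral_congr hpt,
      CondLAux.prod_lint P w hw X hmeas hindep hexp c hc0 (k + 1),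
      ENNReal.ofReal_prod_of_nonneg (fun i _ => by
        split_ifs <;> exact div_nonneg (hw i).le (by linarith [hw i]))]
    refine Finset.prod_congr rfl fun i _ => ?_
    rw [hc]; dsimp only; split_ifs <;> rfl
  obtain ⟨C, hC0, hkey⟩ := CondLAux.key_real w hw hl0 hlL hInf
  have hbd : ∀ j k : ℕ,
      (∫⁻ ω, CondLAux.Gf lamStar X j ω * CondLAux.Gf lamStar X k ω ∂P)
      ≤ ENNReal.ofReal C *
        (ENNReal.ofReal (CondLAux.ArP w l j) * ENNReal.ofReal (CondLAux.ArP w lamStar k) +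
         ENNReal.ofReal (CondLAux.ArP w l k) * ENNReal.ofReal (CondLAux.ArP w lamStar j)) := by
    intro j k
    rcases le_total j k with h | h
    · calc (∫⁻ ω, CondLAux.Gf lamStar X j ω * CondLAux.Gf lamStar X k ω ∂P)
          = ENNReal.ofReal (∏ i ∈ Finset.range (k + 1),
              (if i ≤ j then w i / (2 * lamStar + w i) else w i / (lamStar + w i))) :=
            hcross j k h
        _ ≤ ENNReal.ofReal (C * (CondLAux.ArP w l j * CondLAux.ArP w lamStar k)) :=
            ENNReal.ofReal_le_ofReal (hkey j k h)
        _ = ENNReal.ofReal C *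
              (ENNReal.ofReal (CondLAux.ArP w l j) * ENNReal.ofReal (CondLAux.ArP w lamStar k)) := by
            rw [ENNReal.ofReal_mul hC0, ENNReal.ofReal_mul (hArnn l j hl0)]
        _ ≤ _ := mul_le_mul_right le_self_add _
    · have hcomm : ∀ ω, CondLAux.Gf lamStar X j ω * CondLAux.Gf lamStar X k ω
          = CondLAux.Gf lamStar X k ω * CondLAux.Gf lamStar X j ω := fun ω => mul_comm _ _
      calc (∫⁻ ω, CondLAux.Gf lamStar X j ω * CondLAux.Gf lamStar X k ω ∂P)
          = ENNReal.ofReal (∏ i ∈ Finset.range (j + 1),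
              (if i ≤ k then w i / (2 * lamStar + w i) else w i / (lamStar + w i))) := by
            rw [lintegral_congr hcomm]; exact hcross k j h
        _ ≤ ENNReal.ofReal (C * (CondLAux.ArP w l k * CondLAux.ArP w lamStar j)) :=
            ENNReal.ofReal_le_ofReal (hkey k j h)
        _ = ENNReal.ofReal C *
              (ENNReal.ofReal (CondLAux.ArP w l k) * ENNReal.ofReal (CondLAux.ArP w lamStar j)) := by
            rw [ENNReal.ofReal_mul hC0, ENNReal.ofReal_mul (hArnn l k hl0)]
        _ ≤ _ := mul_le_mul_right le_add_self _
  have htot : (∑' (j : ℕ) (k : ℕ),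
        ∫⁻ ω, CondLAux.Gf lamStar X j ω * CondLAux.Gf lamStar X k ω ∂P)
      ≤ ENNReal.ofReal C * (lapRho w l * lapRho w lamStar + lapRho w l * lapRho w lamStar) := by
    calc (∑' (j : ℕ) (k : ℕ),
          ∫⁻ ω, CondLAux.Gf lamStar X j ω * CondLAux.Gf lamStar X k ω ∂P)
        ≤ ∑' (j : ℕ) (k : ℕ), ENNReal.ofReal C *
            (ENNReal.ofReal (CondLAux.ArP w l j) * ENNReal.ofReal (CondLAux.ArP w lamStar k) +
             ENNReal.ofReal (CondLAux.ArP w l k) * ENNReal.ofReal (CondLAux.ArP w lamStar j)) :=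
          ENNReal.tsum_le_tsum fun j => ENNReal.tsum_le_tsum fun k => hbd j k
      _ = ENNReal.ofReal C * (lapRho w l * lapRho w lamStar + lapRho w l * lapRho w lamStar) := by
          rw [hlap l hl0, hlap lamStar hL0]
          calc (∑' (j : ℕ) (k : ℕ), ENNReal.ofReal C *
              (ENNReal.ofReal (CondLAux.ArP w l j) * ENNReal.ofReal (CondLAux.ArP w lamStar k) +
               ENNReal.ofReal (CondLAux.ArP w l k) * ENNReal.ofReal (CondLAux.ArP w lamStar j)))
              = ∑' (j : ℕ), ENNReal.ofReal C * ∑' (k : ℕ),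
                (ENNReal.ofReal (CondLAux.ArP w l j) * ENNReal.ofReal (CondLAux.ArP w lamStar k) +
                 ENNReal.ofReal (CondLAux.ArP w l k) * ENNReal.ofReal (CondLAux.ArP w lamStar j)) :=
                tsum_congr fun j => ENNReal.tsum_mul_left
            _ = ENNReal.ofReal C * ∑' (j : ℕ), ∑' (k : ℕ),
                (ENNReal.ofReal (CondLAux.ArP w l j) * ENNReal.ofReal (CondLAux.ArP w lamStar k) +
                 ENNReal.ofReal (CondLAux.ArP w l k) * ENNReal.ofReal (CondLAux.ArP w lamStar j)) :=
                ENNReal.tsum_mul_left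
            _ = ENNReal.ofReal C *
                ((∑' (j : ℕ), ENNReal.ofReal (CondLAux.ArP w l j)) *
                  (∑' (k : ℕ), ENNReal.ofReal (CondLAux.ArP w lamStar k)) +
                 (∑' (k : ℕ), ENNReal.ofReal (CondLAux.ArP w l k)) *
                  (∑' (j : ℕ), ENNReal.ofReal (CondLAux.ArP w lamStar j))) := by
                congr 1
                calc (∑' (j : ℕ) (k : ℕ),
                    (ENNReal.ofReal (CondLAux.ArP w l j) * ENNReal.ofReal (CondLAux.ArP w lamStar k) +
                     ENNReal.ofReal (CondLAux.ArP w l k) * ENNReal.ofReal (CondLAux.ArP w lamStar j)))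
                    = ∑' (j : ℕ),
                      (ENNReal.ofReal (CondLAux.ArP w l j) *
                        (∑' (k : ℕ), ENNReal.ofReal (CondLAux.ArP w lamStar k)) +
                       (∑' (k : ℕ), ENNReal.ofReal (CondLAux.ArP w l k)) *
                        ENNReal.ofReal (CondLAux.ArP w lamStar j)) :=
                      tsum_congr fun j => by
                        rw [ENNReal.tsum_add, ENNReal.tsum_mul_left, ENNReal.tsum_mul_right]
                  _ = _ := by
                      rw [ENNReal.tsum_add, ENNReal.tsum_mul_right, ENNReal.tsum_mul_left]
            _ = _ := rfl
  have hfin : ENNReal.ofReal C *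
      (lapRho w l * lapRho w lamStar + lapRho w l * lapRho w lamStar) < ∞ := by
    rw [hone, mul_one]
    exact ENNReal.mul_lt_top ENNReal.ofReal_lt_top
      (ENNReal.add_lt_top.mpr ⟨hlfin.lt_top, hlfin.lt_top⟩)
  have hle1 : ∀ ω : Ω, ENNReal.ofReal
      ((∑' k : ℕ, Real.exp (-(lamStar * ∑ i ∈ Finset.range (k + 1), X i ω))) ^ 2)
      ≤ (∑' k : ℕ, CondLAux.Gf lamStar X k ω) ^ 2 := by
    intro ω
    have hnn : 0 ≤ ∑' k : ℕ, Real.exp (-(lamStar * ∑ i ∈ Finset.range (k + 1), X i ω)) :=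
      tsum_nonneg fun k => (Real.exp_pos _).le
    rw [ENNReal.ofReal_pow hnn]
    gcongr
    by_cases hs : Summable fun k : ℕ =>
      Real.exp (-(lamStar * ∑ i ∈ Finset.range (k + 1), X i ω))
    · rw [ENNReal.ofReal_tsum_of_nonneg (fun k => (Real.exp_pos _).le) hs]
      exact le_rfl
    · rw [tsum_eq_zero_of_not_summable hs, ENNReal.ofReal_zero]
      exact zero_le
  have hpart1 : (∫⁻ ω, ENNReal.ofReal
      ((∑' k : ℕ,
        Real.exp (-(lamStar * ∑ i ∈ Finset.range (k + 1), X i ω))) ^ 2) ∂P) < ∞ := by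
    calc (∫⁻ ω, ENNReal.ofReal
        ((∑' k : ℕ,
          Real.exp (-(lamStar * ∑ i ∈ Finset.range (k + 1), X i ω))) ^ 2) ∂P)
        ≤ ∫⁻ ω, (∑' k : ℕ, CondLAux.Gf lamStar X k ω) ^ 2 ∂P := lintegral_mono hle1
      _ = ∫⁻ ω, ∑' (j : ℕ) (k : ℕ),
            CondLAux.Gf lamStar X j ω * CondLAux.Gf lamStar X k ω ∂P := by
          refine lintegral_congr fun ω => ?_
          rw [sq, ← ENNReal.tsum_mul_right]
          exact tsum_congr fun j => ENNReal.tsum_mul_left.symm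
      _ = ∑' (j : ℕ), ∫⁻ ω, ∑' (k : ℕ),
            CondLAux.Gf lamStar X j ω * CondLAux.Gf lamStar X k ω ∂P :=
          lintegral_tsum fun j =>
            (Measurable.ennreal_tsum fun k => (hGmeas j).mul (hGmeas k)).aemeasurable
      _ = ∑' (j : ℕ) (k : ℕ),
            ∫⁻ ω, CondLAux.Gf lamStar X j ω * CondLAux.Gf lamStar X k ω ∂P :=
          tsum_congr fun j => lintegral_tsum fun k => ((hGmeas j).mul (hGmeas k)).aemeasurable
      _ ≤ ENNReal.ofReal C * (lapRho w l * lapRho w lamStar + lapRho w l * lapRho w lamStar) :=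
          htot
      _ < ∞ := hfin
  refine ⟨hpart1, lt_of_le_of_lt (lintegral_mono fun ω => ?_) hpart1⟩
  apply ENNReal.ofReal_le_ofReal
  have hnn : 0 ≤ ∑' k : ℕ, Real.exp (-(lamStar * ∑ i ∈ Finset.range (k + 1), X i ω)) :=
    tsum_nonneg fun k => (Real.exp_pos _).le
  have hlog : max (Real.log
      (∑' k : ℕ, Real.exp (-(lamStar * ∑ i ∈ Finset.range (k + 1), X i ω)))) 0
      ≤ ∑' k : ℕ, Real.exp (-(lamStar * ∑ i ∈ Finset.range (k + 1), X i ω)) :=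
    max_le (Real.log_le_self hnn) hnn
  calc (∑' k : ℕ, Real.exp (-(lamStar * ∑ i ∈ Finset.range (k + 1), X i ω))) *
        max (Real.log
          (∑' k : ℕ, Real.exp (-(lamStar * ∑ i ∈ Finset.range (k + 1), X i ω)))) 0
      ≤ (∑' k : ℕ, Real.exp (-(lamStar * ∑ i ∈ Finset.range (k + 1), X i ω))) *
        (∑' k : ℕ, Real.exp (-(lamStar * ∑ i ∈ Finset.range (k + 1), X i ω))) :=
        mul_le_mul_of_nonneg_left hlog hnn
    _ = (∑' k : ℕ, Real.exp (-(lamStar * ∑ i ∈ Finset.range (k + 1), X i ω))) ^ 2 :=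
        (sq _).symm
end

section
/- Let w : ℕ → (0,∞) be a weight function such that ρ̂(λ) = Σ_{k=1}^∞ Π_{i=0}^{k−1} w(i)/(λ+w(i)) is finite for some λ > 0 (in particular, this holds under condition (M)). Then Σ_{k=0}^∞ 1/w(k) = ∞. -/
open scoped Classical BigOperators ENNReal

/-- If `ρ̂(λ) < ∞` for some `λ > 0` (in particular under condition (M)), then
`Σ_k 1/w(k) = ∞`. -/
theorem no_explosion (w : ℕ → ℝ) (hw : ∀ n, 0 < w n)
    (hfin : ∃ lam : ℝ, 0 < lam ∧ lapRho w lam ≠ ∞) :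
    ¬ Summable (fun k : ℕ => (w k)⁻¹) := by
  rintro hS
  obtain ⟨lam, hlam, hfin⟩ := hfin
  apply hfin
  set S : ℝ := ∑' k : ℕ, (w k)⁻¹ with hSdef
  have hc : (0:ℝ) < Real.exp (-(lam * S)) := Real.exp_pos _
  -- lower bound each term of the product series
  have key : ∀ k : ℕ,
      ENNReal.ofReal (Real.exp (-(lam * S))) ≤
        ∏ i ∈ Finset.range (k + 1), ENNReal.ofReal (w i / (lam + w i)) := by
    intro k
    have hnn : ∀ i ∈ Finset.range (k+1), (0:ℝ) ≤ w i / (lam + w i) := fun i _ =>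
      le_of_lt (div_pos (hw i) (by linarith [hw i]))
    rw [← ENNReal.ofReal_prod_of_nonneg hnn]
    apply ENNReal.ofReal_le_ofReal
    -- product of (lam + w i)/w i ≤ exp(lam * S)
    have hprod : ∏ i ∈ Finset.range (k+1), (lam + w i) / w i ≤ Real.exp (lam * S) := by
      have h1 : ∏ i ∈ Finset.range (k+1), (lam + w i) / w i
          ≤ ∏ i ∈ Finset.range (k+1), Real.exp (lam * (w i)⁻¹) := by
        apply Finset.prod_le_prod
        · intro i _; exact le_of_lt (div_pos (by linarith [hw i]) (hw i))
        · intro i _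
          have heq : (lam + w i) / w i = lam * (w i)⁻¹ + 1 := by
            rw [div_eq_mul_inv, add_mul, mul_inv_cancel₀ (hw i).ne', mul_comm]
          rw [heq]
          exact Real.add_one_le_exp _
      rw [← Real.exp_sum] at h1
      refine h1.trans (Real.exp_le_exp.mpr ?_)
      rw [← Finset.mul_sum]
      apply mul_le_mul_of_nonneg_left _ hlam.le
      exact Summable.sum_le_tsum _ (fun i _ => (inv_pos.mpr (hw i)).le) hS
    have hpos : (0:ℝ) < ∏ i ∈ Finset.range (k+1), (lam + w i) / w i :=
      Finset.prod_pos fun i _ => div_pos (by linarith [hw i]) (hw i)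
    have hinv : ∏ i ∈ Finset.range (k+1), w i / (lam + w i)
        = (∏ i ∈ Finset.range (k+1), (lam + w i) / w i)⁻¹ := by
      rw [← Finset.prod_inv_distrib]
      exact Finset.prod_congr rfl fun i _ => (inv_div _ _).symm
    rw [hinv, Real.exp_neg]
    exact inv_anti₀ hpos hprod
  -- conclude the tsum is infinite
  have : (∑' _ : ℕ, ENNReal.ofReal (Real.exp (-(lam * S)))) ≤ lapRho w lam :=
    ENNReal.tsum_le_tsum key
  rw [ENNReal.tsum_const_eq_top_of_ne_zero (by
    simp [ENNReal.ofReal_eq_zero, not_le, hc])] at this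
  exact top_le_iff.mp this
end

section
/- Let w : ℕ → (0,∞) be any weight function, let G ∈ 𝒢 with |G| = n+1, and let s ∈ HIST(G) be any historical ordering of G. Then Π_{i=0}^{n−1} w(G,s,i+1) = Π_{x∈G} Π_{j=0}^{deg(x,G)−1} w(j). -/
open scoped Classical BigOperators ENNReal

lemma my_degree_insert (y : Vertex) (T : Finset Vertex) (hy : y ∉ T)
    (hne : y ≠ ([] : Vertex)) (x : Vertex) :
    degree x (insert y T) =
      if y.dropLast = x then degree x T + 1 else degree x T := by
  unfold degree
  rw [Finset.filter_insert]
  split_ifs with h1 h2 h2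
  · exact Finset.card_insert_of_notMem (fun hc => hy (Finset.mem_of_mem_filter _ hc))
  · exact absurd h1.2 h2
  · exact absurd ⟨hne, h2⟩ h1
  · rfl

lemma my_dropLast_ne (y : Vertex) (hne : y ≠ ([] : Vertex)) : y.dropLast ≠ y := by
  intro h
  have := congrArg List.length h
  rw [List.length_dropLast] at this
  have : 0 < y.length := List.length_pos_iff.mpr hne
  omega

lemma my_degree_new (y : Vertex) (T : Finset Vertex) (hT : IsROTree T)
    (hy : y ∉ T) (hne : y ≠ ([] : Vertex)) : degree y (insert y T) = 0 := by
  unfold degree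
  rw [Finset.card_eq_zero, Finset.filter_eq_empty_iff]
  rintro z hz ⟨hz0, hzd⟩
  rcases Finset.mem_insert.mp hz with rfl | hzT
  · exact my_dropLast_ne z hz0 hzd
  · have := (hT.2 z hzT hz0).2.1
    rw [hzd] at this
    exact hy this

lemma my_step (w : ℕ → ℝ) (T : Finset Vertex) (y : Vertex)
    (hT : IsROTree T) (hy : y ∉ T) (hT' : IsROTree (insert y T)) :
    ∏ x ∈ insert y T, ∏ j ∈ Finset.range (degree x (insert y T)), w j
      = w (degree y.dropLast T) * ∏ x ∈ T, ∏ j ∈ Finset.range (degree x T), w j := by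
  have hne : y ≠ ([] : Vertex) := fun h => hy (h ▸ hT.1)
  have hp : y.dropLast ∈ T := by
    have h := (hT'.2 y (Finset.mem_insert_self y T) hne).2.1
    rcases Finset.mem_insert.mp h with h | h
    · exact absurd h (my_dropLast_ne y hne)
    · exact h
  rw [Finset.prod_insert hy, my_degree_new y T hT hy hne]
  simp only [Finset.range_zero, Finset.prod_empty, one_mul]
  have hcongr : ∀ x ∈ T,
      (∏ j ∈ Finset.range (degree x (insert y T)), w j)
        = (∏ j ∈ Finset.range (degree x T), w j) *
            (if y.dropLast = x then w (degree x T) else 1) := by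
    intro x hx
    rw [my_degree_insert y T hy hne x]
    split_ifs with h
    · rw [Finset.prod_range_succ]
    · rw [mul_one]
  rw [Finset.prod_congr rfl hcongr, Finset.prod_mul_distrib,
    Finset.prod_ite_eq, if_pos hp, mul_comm]

/-- For any weight function `w`, any tree `G` with `|G| = n+1` and any
historical ordering `s ∈ HIST(G)`,
`Π_{i=0}^{n−1} w(G,s,i+1) = Π_{x∈G} Π_{j=0}^{deg(x,G)−1} w(j)`. -/
theorem hist_weight_product (w : ℕ → ℝ) (G : Finset Vertex) (hG : IsROTree G)
    (n : ℕ) (hcard : G.card = n + 1) (s : List Vertex) (hs : s ∈ Hist G) :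
    ∏ i ∈ Finset.range n, histw w s (i + 1) =
      ∏ x ∈ G, ∏ j ∈ Finset.range (degree x G), w j := by
  obtain ⟨hnd, htf, hpre⟩ := hs
  have hlen : s.length = n + 1 := by
    rw [← List.toFinset_card_of_nodup hnd, htf, hcard]
  have key : ∀ m, m ≤ n →
      ∏ i ∈ Finset.range m, histw w s (i + 1) =
        ∏ x ∈ (s.take (m + 1)).toFinset,
          ∏ j ∈ Finset.range (degree x (s.take (m + 1)).toFinset), w j := by
    intro m
    induction m with
    | zero =>
      intro _
      rcases s with _ | ⟨a, s'⟩
      · simp at hlen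
      have htree : IsROTree ((a :: s').take 1).toFinset := hpre 0 (by simp)
      simp only [List.take_succ_cons, List.take_zero] at htree ⊢
      have ha : a = ([] : Vertex) := by
        have := htree.1
        simpa using this
      subst ha
      simp [degree, Finset.filter_singleton]
    | succ m ih =>
      intro hm
      set y : Vertex := s.getD (m + 1) [] with hy_def
      set T : Finset Vertex := (s.take (m + 1)).toFinset with hT_def
      have hlt : m + 1 < s.length := by omega
      have htake : s.take (m + 2) = s.take (m + 1) ++ [y] := by
        rw [List.take_succ]
        congr 1
        rw [hy_def]
        simp [List.getD, List.getElem?_eq_getElem hlt]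
      have hins : (s.take (m + 2)).toFinset = insert y T := by
        rw [htake, List.toFinset_append]
        rw [Finset.union_comm, Finset.insert_eq]
        congr 1 <;> simp [hT_def]
      have hyT : y ∉ T := by
        have hnd2 : (s.take (m + 2)).Nodup := (List.take_sublist _ _).nodup hnd
        rw [htake] at hnd2
        have := (List.nodup_append.mp hnd2).2.2
        intro hc
        exact this y (List.mem_toFinset.mp hc) y (List.mem_singleton_self y) rfl
      have hTtree : IsROTree T := hpre m (by omega)
      have hT'tree : IsROTree (insert y T) := by
        rw [← hins]; exact hpre (m + 1) hlt
      rw [Finset.prod_range_succ, ih (by omega), hins,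
        my_step w T y hTtree hyT hT'tree]
      rw [mul_comm]
      rfl
  have h := key n le_rfl
  rwa [show s.take (n + 1) = s from List.take_of_length_le (by omega), htf] at h
end

section
/- Let π be a steady probability measure on 𝒢. Then for every k ∈ ℕ the expected size of the k-th generation under π equals 1, i.e. Σ_{G∈𝒢} π(G) · |{x ∈ G : |x| = k}| = 1; consequently, the expected size of the tree, Σ_{G∈𝒢} π(G)·|G|, is infinite. -/
open scoped Classical BigOperators ENNReal

/-- a probability measure `π` on `𝒢` is *steady* if for every `G ∈ 𝒢`,
`Σ_{H∈𝒢} π(H) · |{x ∈ H : |x| = 1, H↓x = G}| = π(G)` -/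
def Steady (pi : Finset Vertex → ℝ≥0∞) : Prop :=
  ∀ G : Finset Vertex, IsROTree G →
    (∑' H : {H : Finset Vertex // IsROTree H},
      pi H.1 * ((H.1.filter fun x => x.length = 1 ∧ subtreeAt H.1 x = G).card :
        ℝ≥0∞)) = pi G

lemma mem_subtreeAt {G : Finset Vertex} {x z : Vertex} :
    z ∈ subtreeAt G x ↔ x ++ z ∈ G := by
  simp only [subtreeAt, Finset.mem_image, Finset.mem_filter]
  constructor
  · rintro ⟨w, ⟨hw, ⟨t, rfl⟩⟩, rfl⟩
    simpa using hw
  · intro h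
    exact ⟨x ++ z, ⟨h, x.prefix_append z⟩, by simp⟩

lemma eq_dropLast_concat {l : Vertex} (h : l ≠ []) :
    l = l.dropLast ++ [l.getLastD 0] := by
  have := List.dropLast_append_getLast h
  rw [List.getLastD_eq_getLast?, List.getLast?_eq_getLast h]
  simpa using this.symm

lemma isROTree_subtreeAt {G : Finset Vertex} (hG : IsROTree G) {x : Vertex}
    (hx : x ∈ G) : IsROTree (subtreeAt G x) := by
  constructor
  · rw [mem_subtreeAt]; simpa using hx
  · intro y hy hne
    rw [mem_subtreeAt] at hy
    have hrw : x ++ y = (x ++ y.dropLast) ++ [y.getLastD 0] := by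
      conv_lhs => rw [eq_dropLast_concat hne]
      simp
    rw [hrw] at hy
    obtain ⟨h1, h2, h3⟩ := hG.2 _ hy (by simp)
    simp only [List.getLastD_concat, List.dropLast_concat] at h1 h2 h3
    refine ⟨h1, ?_, fun hlt => ?_⟩
    · rw [mem_subtreeAt]; exact h2
    · rw [mem_subtreeAt, ← List.append_assoc]; exact h3 hlt

lemma prefix_mem {G : Finset Vertex} (hG : IsROTree G) :
    ∀ {y : Vertex}, y ∈ G → ∀ {l : Vertex}, l <+: y → l ∈ G := by
  intro y
  induction y using List.reverseRecOn with
  | nil => intro hy l hl; rwa [List.prefix_nil.mp hl]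
  | append_singleton b n ih =>
    intro hy l hl
    rcases List.prefix_concat_iff.mp hl with rfl | h
    · exact hy
    · have h2 : (b ++ [n]).dropLast ∈ G := (hG.2 _ hy (by simp)).2.1
      simp only [List.dropLast_concat] at h2
      exact ih h2 h

lemma card_gen_succ {H : Finset Vertex} (hH : IsROTree H) (k : ℕ) :
    ∑ x ∈ H.filter (fun x : Vertex => x.length = 1),
        ((subtreeAt H x).filter fun y => y.length = k).card
      = (H.filter fun y : Vertex => y.length = k + 1).card := by
  have hstep : ∀ x ∈ H.filter (fun x : Vertex => x.length = 1),
      ((subtreeAt H x).filter fun y => y.length = k).card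
        = (H.filter fun y : Vertex => x <+: y ∧ y.length = k + 1).card := by
    intro x hx
    simp only [Finset.mem_filter] at hx
    apply Finset.card_bij (fun z _ => x ++ z)
    · intro z hz
      simp only [Finset.mem_filter, mem_subtreeAt] at hz ⊢
      exact ⟨hz.1, x.prefix_append z, by simp [hz.2, hx.2]; omega⟩
    · intro a ha b hb hab
      exact List.append_cancel_left hab
    · intro y hy
      simp only [Finset.mem_filter] at hy
      obtain ⟨hyH, ⟨t, rfl⟩, hlen⟩ := hy
      refine ⟨t, ?_, rfl⟩
      simp only [Finset.mem_filter, mem_subtreeAt]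
      refine ⟨hyH, ?_⟩
      simp only [List.length_append, hx.2] at hlen ⊢
      omega
  rw [Finset.sum_congr rfl hstep, ← Finset.card_biUnion]
  · congr 1
    ext y
    simp only [Finset.mem_biUnion, Finset.mem_filter]
    constructor
    · rintro ⟨x, hx, hy, _, hlen⟩; exact ⟨hy, hlen⟩
    · rintro ⟨hy, hlen⟩
      exact ⟨y.take 1, ⟨prefix_mem hH hy (List.take_prefix 1 y),
        by rw [List.length_take]; omega⟩, hy, List.take_prefix 1 y, hlen⟩
  · intro a ha b hb hne
    rw [Function.onFun, Finset.disjoint_left]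
    intro y hy hy'
    simp only [Finset.mem_coe, Finset.mem_filter] at ha hb hy hy'
    apply hne
    have h1 : a = y.take a.length := List.prefix_iff_eq_take.mp hy.2.1
    have h2 : b = y.take b.length := List.prefix_iff_eq_take.mp hy'.2.1
    rw [h1, h2, ha.2, hb.2]

lemma tsum_fiber {α : Type*} (s : Finset α) (g : α → ℝ≥0∞)
    (F : α → Finset Vertex) (hF : ∀ a ∈ s, IsROTree (F a)) :
    (∑' G : {G : Finset Vertex // IsROTree G},
        ∑ a ∈ s, if F a = G.1 then g a else 0) = ∑ a ∈ s, g a := by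
  rw [Summable.tsum_finsetSum (fun a _ => ENNReal.summable)]
  refine Finset.sum_congr rfl fun a ha => ?_
  rw [tsum_eq_single (⟨F a, hF a ha⟩ : {G : Finset Vertex // IsROTree G})]
  · simp
  · intro G hG
    rw [if_neg]
    intro h
    exact hG (Subtype.ext h.symm)

lemma card_tree_eq_tsum {G : Finset Vertex} :
    (G.card : ℝ≥0∞) = ∑' k : ℕ, ((G.filter fun y : Vertex => y.length = k).card : ℝ≥0∞) := by
  have h : ∀ k : ℕ, ((G.filter fun y : Vertex => y.length = k).card : ℝ≥0∞)
      = ∑ y ∈ G, if y.length = k then 1 else 0 := by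
    intro k
    rw [← Finset.sum_filter, Finset.card_eq_sum_ones, Nat.cast_sum]
    simp
  simp_rw [h]
  rw [Summable.tsum_finsetSum (fun a _ => ENNReal.summable)]
  simp only [Finset.card_eq_sum_ones, Nat.cast_sum, Nat.cast_one]
  refine Finset.sum_congr rfl fun y _ => ?_
  rw [tsum_eq_single y.length]
  · simp
  · intro k hk
    rw [if_neg (fun h => hk h.symm)]

noncomputable def genC (k : ℕ) (G : Finset Vertex) : ℝ≥0∞ :=
  ((G.filter fun y : Vertex => y.length = k).card : ℝ≥0∞)

lemma inner_eq (pi : Finset Vertex → ℝ≥0∞) {H : Finset Vertex} (hH : IsROTree H) (k : ℕ) :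
    pi H * genC (k + 1) H
      = ∑' G : {G : Finset Vertex // IsROTree G},
          (pi H * ((H.filter fun x => x.length = 1 ∧ subtreeAt H x = G.1).card : ℝ≥0∞))
            * genC k G.1 := by
  have hA : genC (k + 1) H
      = ∑ x ∈ H.filter (fun x : Vertex => x.length = 1), genC k (subtreeAt H x) := by
    unfold genC
    rw [← card_gen_succ hH k, Nat.cast_sum]
  rw [hA, Finset.mul_sum]
  rw [← tsum_fiber (H.filter (fun x : Vertex => x.length = 1))
    (fun x => pi H * genC k (subtreeAt H x)) (fun x => subtreeAt H x)
    (fun x hx => isROTree_subtreeAt hH (Finset.mem_filter.mp hx).1)]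
  refine tsum_congr fun G => ?_
  have : ∀ x ∈ H.filter (fun x : Vertex => x.length = 1),
      (if subtreeAt H x = G.1 then pi H * genC k (subtreeAt H x) else 0)
        = (if subtreeAt H x = G.1 then pi H * genC k G.1 else 0) := by
    intro x _
    split_ifs with h
    · rw [h]
    · rfl
  rw [Finset.sum_congr rfl this]
  rw [← Finset.sum_filter, Finset.filter_filter, Finset.sum_const, nsmul_eq_mul]
  ring


/-- For a steady probability measure `π` on `𝒢`, the expected size of the
`k`-th generation equals 1 for every `k`; consequently the expected size of
the whole tree is infinite. -/
theorem steady_generation_size (pi : Finset Vertex → ℝ≥0∞)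
    (hprob : ∑' G : {G : Finset Vertex // IsROTree G}, pi G.1 = 1)
    (hsteady : Steady pi) :
    (∀ k : ℕ,
      (∑' G : {G : Finset Vertex // IsROTree G},
        pi G.1 * ((G.1.filter fun x => x.length = k).card : ℝ≥0∞)) = 1) ∧
    (∑' G : {G : Finset Vertex // IsROTree G}, pi G.1 * (G.1.card : ℝ≥0∞)) = ∞ := by
  have hgen : ∀ k : ℕ,
      (∑' G : {G : Finset Vertex // IsROTree G}, pi G.1 * genC k G.1) = 1 := by
    intro k
    induction k with
    | zero =>
      have h0 : ∀ G : {G : Finset Vertex // IsROTree G}, genC 0 G.1 = 1 := by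
        intro G
        have : (G.1.filter fun y : Vertex => y.length = 0) = {([] : Vertex)} := by
          ext y
          simp only [Finset.mem_filter, Finset.mem_singleton, List.length_eq_zero_iff]
          constructor
          · rintro ⟨-, h⟩; exact h
          · rintro rfl; exact ⟨G.2.1, rfl⟩
        unfold genC
        rw [this]
        simp
      calc (∑' G : {G : Finset Vertex // IsROTree G}, pi G.1 * genC 0 G.1)
          = ∑' G : {G : Finset Vertex // IsROTree G}, pi G.1 := by
            refine tsum_congr fun G => ?_; rw [h0 G, mul_one]
        _ = 1 := hprob
    | succ k ih =>
      calc (∑' H : {G : Finset Vertex // IsROTree G}, pi H.1 * genC (k + 1) H.1)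
          = ∑' H : {G : Finset Vertex // IsROTree G},
              ∑' G : {G : Finset Vertex // IsROTree G},
                (pi H.1 * ((H.1.filter fun x =>
                    x.length = 1 ∧ subtreeAt H.1 x = G.1).card : ℝ≥0∞)) * genC k G.1 := by
            exact tsum_congr fun H => inner_eq pi H.2 k
        _ = ∑' G : {G : Finset Vertex // IsROTree G},
              ∑' H : {G : Finset Vertex // IsROTree G},
                (pi H.1 * ((H.1.filter fun x =>
                    x.length = 1 ∧ subtreeAt H.1 x = G.1).card : ℝ≥0∞)) * genC k G.1 :=
            ENNReal.tsum_comm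
        _ = ∑' G : {G : Finset Vertex // IsROTree G}, pi G.1 * genC k G.1 := by
            refine tsum_congr fun G => ?_
            rw [ENNReal.tsum_mul_right, hsteady G.1 G.2]
        _ = 1 := ih
  refine ⟨hgen, ?_⟩
  calc (∑' G : {G : Finset Vertex // IsROTree G}, pi G.1 * (G.1.card : ℝ≥0∞))
      = ∑' G : {G : Finset Vertex // IsROTree G}, ∑' k : ℕ, pi G.1 * genC k G.1 := by
        refine tsum_congr fun G => ?_
        rw [ENNReal.tsum_mul_left (a := pi G.1) (f := fun k => genC k G.1)]
        congr 1
        exact card_tree_eq_tsum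
    _ = ∑' k : ℕ, ∑' G : {G : Finset Vertex // IsROTree G}, pi G.1 * genC k G.1 :=
        ENNReal.tsum_comm
    _ = ∑' _ : ℕ, (1 : ℝ≥0∞) := tsum_congr hgen
    _ = ∞ := ENNReal.tsum_const_eq_top_of_ne_zero one_ne_zero
end

section
/- Let G ∈ 𝒢 with |G| > 1. For a non-root vertex x = (x₁,…,x_n) ∈ G, let B(x) = {y ∈ G : y = (x₁,…,x_{n−1},k) for some k > x_n} be the set of later siblings of x, and set a(x) = max(|G↓x| − 1, 1) and b(x) = max(Σ_{y∈B(x)} |G↓y|, 1). Then the number of historical orderings of G is |HIST(G)| = (|G|−2)! · Π_{x∈G, x≠∅} a(x)^{−1} b(x)^{−1}. -/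
open scoped Classical BigOperators ENNReal

/-- the set `B(x)` of later siblings of `x` in `G` -/
def laterSiblings (G : Finset Vertex) (x : Vertex) : Finset Vertex :=
  G.filter fun y => y ≠ ([] : Vertex) ∧ y.dropLast = x.dropLast ∧
    x.getLastD 0 < y.getLastD 0

namespace CH

/-- decrement the first entry -/
def dec : Vertex → Vertex
  | [] => []
  | k :: t => (k - 1) :: t

/-- increment the first entry -/
def inc : Vertex → Vertex
  | [] => []
  | k :: t => (k + 1) :: t

variable {G : Finset Vertex}

lemma mem_subtreeAt {x z : Vertex} : z ∈ subtreeAt G x ↔ x ++ z ∈ G := by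
  constructor
  · rintro hz
    simp only [subtreeAt, Finset.mem_image, Finset.mem_filter] at hz
    obtain ⟨w, ⟨hwG, hpre⟩, hdrop⟩ := hz
    obtain ⟨t, rfl⟩ := hpre
    rw [List.drop_left] at hdrop
    subst hdrop; exact hwG
  · intro h
    simp only [subtreeAt, Finset.mem_image, Finset.mem_filter]
    exact ⟨x ++ z, ⟨h, ⟨z, rfl⟩⟩, List.drop_left⟩

lemma card_subtreeAt (x : Vertex) :
    (subtreeAt G x).card = (G.filter fun z => x <+: z).card := by
  apply Finset.card_image_of_injOn
  intro a ha b hb hab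
  simp only [Finset.coe_filter, Set.mem_setOf_eq] at ha hb
  obtain ⟨t, rfl⟩ := ha.2
  obtain ⟨u, rfl⟩ := hb.2
  simp only [List.drop_left] at hab
  rw [hab]

lemma take_mem (hG : IsROTree G) : ∀ {y : Vertex}, y ∈ G → ∀ j, y.take j ∈ G := by
  intro y
  induction y using List.reverseRecOn with
  | nil => intro h j; simpa using h
  | append_singleton l a ih =>
    intro h j
    have hne : l ++ [a] ≠ ([] : Vertex) := by simp
    have hparent : (l ++ [a]).dropLast ∈ G := (hG.2 _ h hne).2.1
    rw [List.dropLast_concat] at hparent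
    rcases le_or_gt (l.length + 1) j with hj | hj
    · rwa [List.take_of_length_le (by simpa using hj)]
    · have : (l ++ [a]).take j = l.take j := by
        rw [List.take_append_of_le_length (by omega)]
      rw [this]
      exact ih hparent j

lemma getLastD_concat (l : List ℕ) (a : ℕ) : (l ++ [a]).getLastD 0 = a := by
  rw [List.getLastD_eq_getLast?, List.getLast?_concat]
  rfl

/-- chain down to earlier siblings -/
lemma sib_mem (hG : IsROTree G) {p : Vertex} {k : ℕ} (h : p ++ [k] ∈ G) :
    ∀ j, 1 ≤ j → j ≤ k → p ++ [j] ∈ G := by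
  intro j h1 hk
  induction k with
  | zero => omega
  | succ n ih =>
    rcases eq_or_lt_of_le hk with rfl | hlt
    · exact h
    · apply ih _ (by omega)
      have hne : p ++ [n+1] ≠ ([] : Vertex) := by simp
      have := (hG.2 _ h hne).2.2
      rw [getLastD_concat, List.dropLast_concat] at this
      simpa using this (by omega)

lemma head_mem (hG : IsROTree G) {y : Vertex} (hy : y ∈ G) (hne : y ≠ []) :
    [y.headI] ∈ G := by
  have := take_mem hG hy 1
  cases y with
  | nil => exact absurd rfl hne
  | cons a t => simpa using this

lemma head_pos (hG : IsROTree G) {y : Vertex} (hy : y ∈ G) (hne : y ≠ []) :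
    1 ≤ y.headI := by
  have h1 : [y.headI] ∈ G := head_mem hG hy hne
  have := (hG.2 _ h1 (by simp)).1
  simpa using this

lemma one_mem (hG : IsROTree G) (hcard : 2 ≤ G.card) : [1] ∈ G := by
  obtain ⟨y, hyG, hyne⟩ : ∃ y ∈ G, y ≠ ([] : Vertex) := by
    by_contra hc
    push_neg at hc
    have : G ⊆ {([] : Vertex)} := fun y hy => Finset.mem_singleton.mpr (hc y hy)
    have := Finset.card_le_card this
    simp at this; omega
  have h1 : [y.headI] ∈ G := head_mem hG hyG hyne
  have hp : 1 ≤ y.headI := head_pos hG hyG hyne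
  have := sib_mem hG (p := []) (k := y.headI) (by simpa using h1) 1 le_rfl hp
  simpa using this

end CH

namespace CH

variable {G : Finset Vertex}

lemma concat_self {y : Vertex} (h : y ≠ []) : y.dropLast ++ [y.getLastD 0] = y := by
  conv_rhs => rw [← List.dropLast_append_getLast h]
  rw [List.getLastD_eq_getLast? , List.getLast?_eq_getLast h]
  rfl

lemma getLastD_append {x y : Vertex} (h : y ≠ []) :
    (x ++ y).getLastD 0 = y.getLastD 0 := by
  induction y using List.reverseRecOn with
  | nil => exact absurd rfl h
  | append_singleton r a _ =>
    rw [← List.append_assoc, getLastD_concat, getLastD_concat]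

lemma dropLast_append' {x y : Vertex} (h : y ≠ []) :
    (x ++ y).dropLast = x ++ y.dropLast := by
  rw [List.dropLast_append_of_ne_nil h]

lemma subtree_isROTree (hG : IsROTree G) {x : Vertex} (hx : x ∈ G) :
    IsROTree (subtreeAt G x) := by
  constructor
  · rw [mem_subtreeAt, List.append_nil]; exact hx
  · intro z hz hzne
    rw [mem_subtreeAt] at hz
    have hxz : x ++ z ≠ ([] : Vertex) := by simp [hzne]
    obtain ⟨h1, h2, h3⟩ := hG.2 _ hz hxz
    rw [getLastD_append hzne] at h1 h3
    rw [dropLast_append' hzne] at h2 h3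
    refine ⟨h1, ?_, ?_⟩
    · rw [mem_subtreeAt]; exact h2
    · intro hlt
      rw [mem_subtreeAt, ← List.append_assoc]
      exact h3 hlt

/-- the first subtree -/
def T1 (G : Finset Vertex) : Finset Vertex := subtreeAt G [1]

/-- the tree obtained by deleting the first subtree and shifting -/
def Gq (G : Finset Vertex) : Finset Vertex :=
  (G.filter fun y => ¬ [1] <+: y).image dec

lemma mem_T1 {z : Vertex} : z ∈ T1 G ↔ 1 :: z ∈ G := by
  rw [T1, mem_subtreeAt]; rfl

lemma not_one_prefix {k : ℕ} {t : List ℕ} (hk : k ≠ 1) : ¬ ([1] <+: k :: t) := by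
  intro h
  rw [List.cons_prefix_cons] at h
  exact hk h.1.symm

lemma nil_mem_Gq (hG : IsROTree G) : ([] : Vertex) ∈ Gq G := by
  rw [Gq, Finset.mem_image]
  exact ⟨[], by simp [hG.1, dec], rfl⟩

lemma cons_mem_Gq (hG : IsROTree G) {k : ℕ} {t : List ℕ} (hk : 1 ≤ k) :
    k :: t ∈ Gq G ↔ (k + 1) :: t ∈ G := by
  rw [Gq, Finset.mem_image]
  constructor
  · rintro ⟨w, hw, hdec⟩
    rw [Finset.mem_filter] at hw
    cases w with
    | nil => simp [dec] at hdec
    | cons a r =>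
      have ha : 1 ≤ a := head_pos hG hw.1 (by simp)
      have ha1 : a ≠ 1 := by
        intro h; subst h; exact hw.2 (by simp [List.cons_prefix_cons])
      simp only [dec, List.cons.injEq] at hdec
      obtain ⟨rfl, rfl⟩ := hdec
      have : a - 1 + 1 = a := by omega
      rw [this]
      exact hw.1
  · intro h
    refine ⟨(k+1) :: t, ?_, by simp [dec]⟩
    rw [Finset.mem_filter]
    exact ⟨h, not_one_prefix (by omega)⟩

lemma mem_Gq_shape (hG : IsROTree G) {z : Vertex} (hz : z ∈ Gq G) (hne : z ≠ []) :
    ∃ k t, z = k :: t ∧ 1 ≤ k ∧ (k + 1) :: t ∈ G := by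
  rw [Gq, Finset.mem_image] at hz
  obtain ⟨w, hw, hdec⟩ := hz
  rw [Finset.mem_filter] at hw
  cases w with
  | nil => exact absurd hdec.symm (by simpa [dec] using hne)
  | cons a r =>
    have ha : 1 ≤ a := head_pos hG hw.1 (by simp)
    have ha1 : a ≠ 1 := by
      intro h; subst h; exact hw.2 (by simp [List.cons_prefix_cons])
    simp only [dec, List.cons.injEq] at hdec
    refine ⟨a - 1, r, hdec.symm, by omega, ?_⟩
    have : a - 1 + 1 = a := by omega
    rw [this]
    exact hw.1

lemma Gq_isROTree (hG : IsROTree G) : IsROTree (Gq G) := by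
  refine ⟨nil_mem_Gq hG, ?_⟩
  intro z hz hzne
  obtain ⟨k, t, rfl, hk, hmem⟩ := mem_Gq_shape hG hz hzne
  cases t using List.reverseRecOn with
  | nil =>
    -- z = [k], parent = [], prev sib [k-1]
    have hl : ([k] : Vertex).getLastD 0 = k := getLastD_concat [] k
    have hd : ([k] : Vertex).dropLast = [] := rfl
    rw [hl, hd]
    refine ⟨hk, nil_mem_Gq hG, ?_⟩
    intro hlt
    rw [List.nil_append, cons_mem_Gq hG (by omega), show k - 1 + 1 = k by omega]
    have h3 := (hG.2 _ hmem (by simp)).2.2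
    have hl2 : ([k+1] : Vertex).getLastD 0 = k + 1 := getLastD_concat [] (k+1)
    rw [hl2] at h3
    simpa using h3 (by omega)
  | append_singleton r a ih =>
    have hne2 : (r ++ [a] : List ℕ) ≠ [] := by simp
    obtain ⟨h1, h2, h3⟩ := hG.2 _ hmem (by simp)
    have hlast : ((k+1) :: (r ++ [a])).getLastD 0 = a := by
      rw [show ((k+1) :: (r ++ [a]) : List ℕ) = ((k+1) :: r) ++ [a] by simp,
        getLastD_concat]
    have hlastz : (k :: (r ++ [a])).getLastD 0 = a := by
      rw [show (k :: (r ++ [a]) : List ℕ) = (k :: r) ++ [a] by simp, getLastD_concat]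
    rw [hlast] at h1 h3
    have hdrop : ((k+1) :: (r ++ [a])).dropLast = (k+1) :: r := by
      rw [show ((k+1) :: (r ++ [a]) : List ℕ) = ((k+1) :: r) ++ [a] by simp,
        List.dropLast_concat]
    have hdropz : (k :: (r ++ [a])).dropLast = k :: r := by
      rw [show (k :: (r ++ [a]) : List ℕ) = (k :: r) ++ [a] by simp,
        List.dropLast_concat]
    rw [hdrop] at h2 h3
    refine ⟨by rw [hlastz]; exact h1, ?_, ?_⟩
    · rw [hdropz, cons_mem_Gq hG hk]; exact h2
    · intro hlt
      rw [hlastz] at hlt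
      rw [hlastz, hdropz, show (k :: r) ++ [a-1] = k :: (r ++ [a-1]) by simp,
        cons_mem_Gq hG hk]
      simpa using h3 hlt

lemma T1_isROTree (hG : IsROTree G) (h1 : [1] ∈ G) : IsROTree (T1 G) :=
  subtree_isROTree hG h1

end CH

namespace CH

variable {G : Finset Vertex}

lemma mem_laterSiblings {x y : Vertex} :
    y ∈ laterSiblings G x ↔ y ∈ G ∧ ∃ c, x.getLastD 0 < c ∧ y = x.dropLast ++ [c] := by
  rw [laterSiblings, Finset.mem_filter]
  constructor
  · rintro ⟨hyG, hyne, hdl, hlt⟩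
    exact ⟨hyG, y.getLastD 0, hlt, by rw [← hdl, concat_self hyne]⟩
  · rintro ⟨hyG, c, hlt, rfl⟩
    exact ⟨hyG, by simp, by rw [List.dropLast_concat], by rw [getLastD_concat]; exact hlt⟩

lemma getLastD_cons (a : ℕ) {x : Vertex} (hx : x ≠ []) :
    (a :: x).getLastD 0 = x.getLastD 0 := getLastD_append (x := [a]) hx

lemma dropLast_cons' (a : ℕ) {x : Vertex} (hx : x ≠ []) :
    (a :: x).dropLast = a :: x.dropLast := dropLast_append' (x := [a]) hx

lemma getLastD_singleton (a : ℕ) : ([a] : Vertex).getLastD 0 = a := rfl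

lemma dropLast_singleton' (a : ℕ) : ([a] : Vertex).dropLast = [] := rfl

lemma subtreeAt_T1 (x : Vertex) : subtreeAt (T1 G) x = subtreeAt G (1 :: x) := by
  ext z
  rw [mem_subtreeAt, mem_subtreeAt, mem_T1]
  rfl

lemma subtreeAt_Gq (hG : IsROTree G) {j : ℕ} (hj : 1 ≤ j) (t : List ℕ) :
    subtreeAt (Gq G) (j :: t) = subtreeAt G ((j + 1) :: t) := by
  ext z
  rw [mem_subtreeAt, mem_subtreeAt]
  show j :: (t ++ z) ∈ Gq G ↔ (j+1) :: (t ++ z) ∈ G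
  exact cons_mem_Gq hG hj

lemma laterSiblings_T1 {x : Vertex} (hx : x ≠ []) :
    laterSiblings G (1 :: x) = (laterSiblings (T1 G) x).image (1 :: ·) := by
  ext y
  rw [mem_laterSiblings]
  simp only [Finset.mem_image]
  constructor
  · rintro ⟨hyG, c, hlt, rfl⟩
    rw [dropLast_cons' 1 hx] at *
    rw [getLastD_cons 1 hx] at hlt
    refine ⟨x.dropLast ++ [c], ?_, by simp⟩
    rw [mem_laterSiblings]
    exact ⟨by rw [mem_T1]; simpa using hyG, c, hlt, rfl⟩
  · rintro ⟨y', hy', rfl⟩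
    rw [mem_laterSiblings] at hy'
    obtain ⟨hy'T, c, hlt, rfl⟩ := hy'
    rw [mem_T1] at hy'T
    refine ⟨by simpa using hy'T, c, ?_, ?_⟩
    · rwa [getLastD_cons 1 hx]
    · rw [dropLast_cons' 1 hx]
      simp

lemma inc_concat (l : List ℕ) (hl : l ≠ []) (c : ℕ) : inc (l ++ [c]) = inc l ++ [c] := by
  cases l with
  | nil => exact absurd rfl hl
  | cons a t => rfl

lemma laterSiblings_Gq (hG : IsROTree G) {j : ℕ} (hj : 1 ≤ j) (t : List ℕ) :
    laterSiblings G ((j + 1) :: t) = (laterSiblings (Gq G) (j :: t)).image inc := by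
  ext y
  rw [mem_laterSiblings]
  simp only [Finset.mem_image]
  cases t using List.reverseRecOn with
  | nil =>
    -- x = [j+1], siblings are [c], c > j+1
    constructor
    · rintro ⟨hyG, c, hlt, rfl⟩
      have hl : ([j+1] : Vertex).getLastD 0 = j + 1 := rfl
      rw [hl] at hlt
      refine ⟨[c - 1], ?_, ?_⟩
      · rw [mem_laterSiblings]
        refine ⟨by rw [cons_mem_Gq hG (by omega), show c - 1 + 1 = c by omega]; simpa using hyG,
          c - 1, ?_, rfl⟩
        rw [getLastD_singleton j]
        omega
      · show inc [c-1] = _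
        simp only [inc]
        rw [show c - 1 + 1 = c by omega]
        simp
    · rintro ⟨y', hy', rfl⟩
      rw [mem_laterSiblings] at hy'
      obtain ⟨hy'q, c, hlt, rfl⟩ := hy'
      have hl : ([j] : Vertex).getLastD 0 = j := rfl
      rw [hl] at hlt
      have hdl : ([j] : Vertex).dropLast = [] := rfl
      rw [hdl, List.nil_append] at hy'q ⊢
      rw [cons_mem_Gq hG (by omega)] at hy'q
      refine ⟨hy'q, c + 1, ?_, rfl⟩
      rw [getLastD_singleton (j+1)]
      omega
  | append_singleton r a _ =>
    have hrne : (r ++ [a] : List ℕ) ≠ [] := by simp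
    have hd1 : ((j+1) :: (r ++ [a])).dropLast = (j+1) :: r := by
      rw [show ((j+1) :: (r ++ [a]) : List ℕ) = ((j+1) :: r) ++ [a] by simp,
        List.dropLast_concat]
    have hd2 : (j :: (r ++ [a])).dropLast = j :: r := by
      rw [show (j :: (r ++ [a]) : List ℕ) = (j :: r) ++ [a] by simp, List.dropLast_concat]
    have hl1 : ((j+1) :: (r ++ [a])).getLastD 0 = a := by
      rw [show ((j+1) :: (r ++ [a]) : List ℕ) = ((j+1) :: r) ++ [a] by simp, getLastD_concat]
    have hl2 : (j :: (r ++ [a])).getLastD 0 = a := by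
      rw [show (j :: (r ++ [a]) : List ℕ) = (j :: r) ++ [a] by simp, getLastD_concat]
    rw [hd1, hl1]
    constructor
    · rintro ⟨hyG, c, hlt, rfl⟩
      refine ⟨j :: (r ++ [c]), ?_, ?_⟩
      · rw [mem_laterSiblings, hd2, hl2]
        refine ⟨by rw [cons_mem_Gq hG hj]; simpa using hyG, c, hlt, by simp⟩
      · show inc _ = _
        simp [inc]
    · rintro ⟨y', hy', rfl⟩
      rw [mem_laterSiblings, hd2, hl2] at hy'
      obtain ⟨hy'q, c, hlt, rfl⟩ := hy'
      rw [show (j :: r) ++ [c] = j :: (r ++ [c]) by simp, cons_mem_Gq hG hj] at hy'q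
      exact ⟨by simpa [inc] using hy'q, c, hlt, by simp [inc]⟩

end CH

namespace CH

variable {G : Finset Vertex}

lemma inc_injective : Function.Injective inc := by
  intro a b hab
  cases a with
  | nil => cases b with
    | nil => rfl
    | cons k t => simp [inc] at hab
  | cons k t => cases b with
    | nil => simp [inc] at hab
    | cons j r =>
      simp only [inc, List.cons.injEq] at hab
      simp only [List.cons.injEq]
      exact ⟨by omega, hab.2⟩

lemma cons_injective (a : ℕ) : Function.Injective (a :: · : Vertex → Vertex) := by
  intro x y h; simpa using h

/-- the factor associated to a vertex in the product formula -/
noncomputable def ff (G : Finset Vertex) (x : Vertex) : ℝ :=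
  ((max ((subtreeAt G x).card - 1) 1 : ℕ) : ℝ)⁻¹ *
    ((max (∑ y ∈ laterSiblings G x, (subtreeAt G y).card) 1 : ℕ) : ℝ)⁻¹

/-- the RHS of the counting formula -/
noncomputable def Hfun (G : Finset Vertex) : ℝ :=
  (Nat.factorial (G.card - 2) : ℝ) * ∏ x ∈ G.erase ([] : Vertex), ff G x

lemma card_T1 : (T1 G).card = (G.filter fun y => [1] <+: y).card :=
  card_subtreeAt [1]

lemma card_Gq (hG : IsROTree G) :
    (Gq G).card = (G.filter fun y => ¬ [1] <+: y).card := by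
  apply Finset.card_image_of_injOn
  intro a ha b hb hab
  simp only [Finset.coe_filter, Set.mem_setOf_eq] at ha hb
  cases a with
  | nil => cases b with
    | nil => rfl
    | cons j r =>
      have hj : 1 ≤ j := head_pos hG hb.1 (by simp)
      simp [dec] at hab
  | cons k t =>
    have hk : 1 ≤ k := head_pos hG ha.1 (by simp)
    have hk1 : k ≠ 1 := fun h => ha.2 (h ▸ by simp [List.cons_prefix_cons])
    cases b with
    | nil => simp [dec] at hab
    | cons j r =>
      have hj : 1 ≤ j := head_pos hG hb.1 (by simp)
      have hj1 : j ≠ 1 := fun h => hb.2 (h ▸ by simp [List.cons_prefix_cons])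
      simp only [dec, List.cons.injEq] at hab
      obtain ⟨h1, rfl⟩ := hab
      have : k = j := by omega
      rw [this]



lemma card_split :
    G.card = (G.filter fun y => [1] <+: y).card + (G.filter fun y => ¬ [1] <+: y).card :=
  (Finset.card_filter_add_card_filter_not (fun y => [1] <+: y)).symm

lemma card_T1_add_card_Gq (hG : IsROTree G) : (T1 G).card + (Gq G).card = G.card := by
  rw [card_T1, card_Gq hG]
  exact Finset.card_filter_add_card_filter_not _

lemma subtreeAt_Gq' (hG : IsROTree G) {v : Vertex} (hv : v ∈ Gq G) (hne : v ≠ []) :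
    subtreeAt (Gq G) v = subtreeAt G (inc v) := by
  obtain ⟨j, t, rfl, hj, _⟩ := mem_Gq_shape hG hv hne
  exact subtreeAt_Gq hG hj t

lemma ff_T1 {x : Vertex} (hx : x ≠ []) : ff G (1 :: x) = ff (T1 G) x := by
  unfold ff
  have hs : ∑ y ∈ laterSiblings (T1 G) x, (subtreeAt G (1 :: y)).card
      = ∑ y ∈ laterSiblings (T1 G) x, (subtreeAt (T1 G) y).card :=
    Finset.sum_congr rfl (fun y _ => by rw [subtreeAt_T1])
  rw [subtreeAt_T1, laterSiblings_T1 hx,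
    Finset.sum_image (fun a _ b _ h => cons_injective 1 h), hs]

lemma ff_Gq (hG : IsROTree G) {z : Vertex} (hz : z ∈ Gq G) (hne : z ≠ []) :
    ff G (inc z) = ff (Gq G) z := by
  obtain ⟨j, t, rfl, hj, hmem⟩ := mem_Gq_shape hG hz hne
  show ff G ((j+1) :: t) = _
  unfold ff
  have hs : ∑ y ∈ laterSiblings (Gq G) (j :: t), (subtreeAt G (inc y)).card
      = ∑ y ∈ laterSiblings (Gq G) (j :: t), (subtreeAt (Gq G) y).card := by
    apply Finset.sum_congr rfl
    intro y hy
    rw [laterSiblings, Finset.mem_filter] at hy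
    rw [subtreeAt_Gq' hG hy.1 hy.2.1]
  rw [← subtreeAt_Gq hG hj, laterSiblings_Gq hG hj,
    Finset.sum_image (fun a _ b _ h => inc_injective h), hs]

end CH

namespace CH

variable {G : Finset Vertex}

lemma headI_ne_one {z : Vertex} (hz : z ≠ []) (h : ¬ [1] <+: z) : z.headI ≠ 1 := by
  cases z with
  | nil => exact absurd rfl hz
  | cons k t =>
    intro hk
    exact h (by simp [List.cons_prefix_cons, hk.symm] )

lemma sum_sib_one (hG : IsROTree G) :
    ∑ y ∈ laterSiblings G [1], (subtreeAt G y).card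
      = (G.filter fun z => ¬ [1] <+: z).card - 1 := by
  have hnil : ([] : Vertex) ∈ G.filter fun z => ¬ [1] <+: z := by
    simp only [Finset.mem_filter]
    exact ⟨hG.1, by simp⟩
  rw [← Finset.card_erase_of_mem hnil]
  have key : ((G.filter fun z => ¬ [1] <+: z).erase ([] : Vertex)).card
      = ∑ y ∈ laterSiblings G [1],
          (((G.filter fun z => ¬ [1] <+: z).erase ([] : Vertex)).filter
            fun z => [z.headI] = y).card := by
    apply Finset.card_eq_sum_card_fiberwise
    intro z hz
    simp only [Finset.mem_coe, Finset.mem_erase, Finset.mem_filter] at hz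
    obtain ⟨hzne, hzG, hnp⟩ := hz
    rw [Finset.mem_coe, mem_laterSiblings]
    refine ⟨head_mem hG hzG hzne, z.headI, ?_, by simp⟩
    have h1 := head_pos hG hzG hzne
    have h2 := headI_ne_one hzne hnp
    have : ([1] : Vertex).getLastD 0 = 1 := rfl
    rw [this]
    omega
  rw [key]
  apply Finset.sum_congr rfl
  intro y hy
  rw [mem_laterSiblings] at hy
  obtain ⟨hyG, c, hc, rfl⟩ := hy
  have hc' : 1 < c := by
    have : ([1] : Vertex).getLastD 0 = 1 := rfl
    rwa [this] at hc
  rw [card_subtreeAt]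
  congr 1
  ext z
  simp only [Finset.mem_filter, Finset.mem_erase]
  constructor
  · rintro ⟨hzG, hpre⟩
    cases z with
    | nil =>
      exfalso
      have := hpre.length_le
      simp at this
    | cons k t =>
      have hpre' : [c] <+: k :: t := by simpa using hpre
      rw [List.cons_prefix_cons] at hpre'
      obtain ⟨rfl, -⟩ := hpre'
      refine ⟨⟨by simp, hzG, not_one_prefix (by omega)⟩, by simp⟩
  · rintro ⟨⟨hzne, hzG, hnp⟩, hhead⟩
    refine ⟨hzG, ?_⟩
    cases z with
    | nil => exact absurd rfl hzne
    | cons k t =>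
      have : k = c := by
        have h2 : ([k] : Vertex) = [c] := by simpa using hhead
        simpa using h2
      subst this
      simp [List.cons_prefix_cons]


lemma arith (m q : ℕ) (hm : 1 ≤ m) (hq : 1 ≤ q) :
    (Nat.factorial (m + q - 2) : ℝ) * ((max (m - 1) 1 : ℕ) : ℝ)⁻¹ *
        ((max (q - 1) 1 : ℕ) : ℝ)⁻¹
      = (Nat.choose (m + q - 2) (m - 1) : ℝ) * (Nat.factorial (m - 2) : ℝ) *
          (Nat.factorial (q - 2) : ℝ) := by
  rcases Nat.lt_or_ge m 2 with hm2 | hm2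
  · have hm1 : m = 1 := by omega
    subst hm1
    rcases Nat.lt_or_ge q 2 with hq2 | hq2
    · have : q = 1 := by omega
      subst this
      norm_num
    · obtain ⟨b, rfl⟩ : ∃ b, q = b + 2 := ⟨q - 2, by omega⟩
      have h1 : 1 + (b + 2) - 2 = b + 1 := by omega
      have h2 : (1 : ℕ) - 1 = 0 := rfl
      have h3 : b + 2 - 1 = b + 1 := by omega
      rw [h1, h2, h3, show b + 2 - 2 = b by omega, Nat.choose_zero_right,
        max_eq_right (by omega), max_eq_left (by omega), Nat.factorial_zero]
      have : ((b:ℝ) + 1) ≠ 0 := by positivity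
      push_cast [Nat.factorial_succ]
      field_simp
  · obtain ⟨a, rfl⟩ : ∃ a, m = a + 2 := ⟨m - 2, by omega⟩
    rcases Nat.lt_or_ge q 2 with hq2 | hq2
    · have : q = 1 := by omega
      subst this
      have h1 : a + 2 + 1 - 2 = a + 1 := by omega
      have h2 : a + 2 - 1 = a + 1 := by omega
      have h3 : a + 2 - 2 = a := by omega
      rw [h1, h2, h3, Nat.choose_self, max_eq_left (by omega),
        max_eq_right (by omega), Nat.factorial_zero]
      have : ((a:ℝ) + 1) ≠ 0 := by positivity
      push_cast [Nat.factorial_succ]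
      field_simp
    · obtain ⟨b, rfl⟩ : ∃ b, q = b + 2 := ⟨q - 2, by omega⟩
      have h1 : a + 2 + (b + 2) - 2 = a + b + 2 := by omega
      have h2 : a + 2 - 1 = a + 1 := by omega
      have h3 : b + 2 - 1 = b + 1 := by omega
      have h4 : a + 2 - 2 = a := by omega
      have h5 : b + 2 - 2 = b := by omega
      rw [h1, h2, h3, h4, h5, max_eq_left (by omega), max_eq_left (by omega)]
      have hch := Nat.choose_mul_factorial_mul_factorial
        (show a + 1 ≤ a + b + 2 by omega)
      have hsub : a + b + 2 - (a + 1) = b + 1 := by omega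
      rw [hsub] at hch
      have key : (Nat.factorial (a + b + 2) : ℝ)
          = (Nat.choose (a + b + 2) (a + 1) : ℝ) * ((a + 1) * Nat.factorial a)
            * ((b + 1) * Nat.factorial b) := by
        rw [← hch]
        push_cast [Nat.factorial_succ]
        ring
      rw [key]
      have ha : ((a:ℝ) + 1) ≠ 0 := by positivity
      have hb : ((b:ℝ) + 1) ≠ 0 := by positivity
      push_cast
      field_simp

end CH

namespace CH

variable {G : Finset Vertex}

lemma nil_mem_T1 (h1 : [1] ∈ G) : ([] : Vertex) ∈ T1 G := by
  rw [mem_T1]; exact h1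

lemma coneErase_eq (h1 : [1] ∈ G) :
    (G.filter fun y => [1] <+: y).erase [1] = ((T1 G).erase []).image (1 :: ·) := by
  ext x
  simp only [Finset.mem_erase, Finset.mem_filter, Finset.mem_image]
  constructor
  · rintro ⟨hne, hxG, hpre⟩
    obtain ⟨t, rfl⟩ := hpre
    refine ⟨t, ⟨?_, ?_⟩, rfl⟩
    · intro h; subst h; exact hne (by simp)
    · rw [mem_T1]; simpa using hxG
  · rintro ⟨t, ⟨htne, htT⟩, rfl⟩
    rw [mem_T1] at htT
    exact ⟨by simpa using htne, by simpa using htT, by simp [List.cons_prefix_cons]⟩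

lemma restErase_eq (hG : IsROTree G) :
    (G.erase []).filter (fun y => ¬ [1] <+: y) = ((Gq G).erase []).image inc := by
  ext x
  simp only [Finset.mem_erase, Finset.mem_filter, Finset.mem_image]
  constructor
  · rintro ⟨⟨hne, hxG⟩, hpre⟩
    cases x with
    | nil => exact absurd rfl hne
    | cons k t =>
      have hk : 1 ≤ k := head_pos hG hxG (by simp)
      have hk1 : k ≠ 1 := fun h => hpre (h ▸ by simp [List.cons_prefix_cons])
      refine ⟨(k - 1) :: t, ⟨by simp, ?_⟩, ?_⟩
      · rw [cons_mem_Gq hG (by omega), show k - 1 + 1 = k by omega]; exact hxG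
      · show inc _ = _
        simp only [inc]
        rw [show k - 1 + 1 = k by omega]
  · rintro ⟨v, ⟨hvne, hvq⟩, rfl⟩
    obtain ⟨j, t, rfl, hj, hmem⟩ := mem_Gq_shape hG hvq hvne
    refine ⟨⟨by simp [inc], by simpa [inc] using hmem⟩, ?_⟩
    show ¬ [1] <+: (j + 1) :: t
    exact not_one_prefix (by omega)

lemma eraseFilter_pos (hG : IsROTree G) :
    (G.erase []).filter (fun y => [1] <+: y) = G.filter fun y => [1] <+: y := by
  ext x
  simp only [Finset.mem_erase, Finset.mem_filter]
  constructor
  · rintro ⟨⟨-, hxG⟩, hp⟩; exact ⟨hxG, hp⟩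
  · rintro ⟨hxG, hp⟩
    refine ⟨⟨?_, hxG⟩, hp⟩
    intro h; subst h
    exact absurd hp.length_le (by simp)

lemma ff_one (hG : IsROTree G) :
    ff G [1] = ((max ((T1 G).card - 1) 1 : ℕ) : ℝ)⁻¹ *
      ((max ((Gq G).card - 1) 1 : ℕ) : ℝ)⁻¹ := by
  unfold ff
  have h1 : subtreeAt G [1] = T1 G := rfl
  rw [h1, sum_sib_one hG, card_Gq hG]

lemma prod_split (hG : IsROTree G) (h1 : [1] ∈ G) :
    ∏ x ∈ G.erase ([] : Vertex), ff G x
      = ff G [1] * (∏ x ∈ (T1 G).erase ([] : Vertex), ff (T1 G) x)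
          * ∏ x ∈ (Gq G).erase ([] : Vertex), ff (Gq G) x := by
  rw [← Finset.prod_filter_mul_prod_filter_not (G.erase []) (fun y => [1] <+: y)]
  congr 1
  · rw [eraseFilter_pos hG]
    have hmem : [1] ∈ G.filter fun y => [1] <+: y := by
      simp only [Finset.mem_filter]; exact ⟨h1, by simp⟩
    rw [← Finset.mul_prod_erase _ _ hmem, coneErase_eq h1,
      Finset.prod_image (fun a _ b _ h => cons_injective 1 h)]
    congr 1
    apply Finset.prod_congr rfl
    intro x hx
    rw [Finset.mem_erase] at hx
    exact ff_T1 hx.1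
  · rw [restErase_eq hG, Finset.prod_image (fun a _ b _ h => inc_injective h)]
    apply Finset.prod_congr rfl
    intro x hx
    rw [Finset.mem_erase] at hx
    exact ff_Gq hG hx.2 hx.1

/-- Lemma S : the shuffle recursion for the formula -/
lemma lemS (hG : IsROTree G) (hcard : 2 ≤ G.card) :
    Hfun G = (Nat.choose (G.card - 2) ((T1 G).card - 1) : ℝ) * Hfun (T1 G) * Hfun (Gq G) := by
  have h1 : [1] ∈ G := one_mem hG hcard
  have hmq : (T1 G).card + (Gq G).card = G.card := card_T1_add_card_Gq hG
  have hm : 1 ≤ (T1 G).card := Finset.card_pos.mpr ⟨[], nil_mem_T1 h1⟩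
  have hq : 1 ≤ (Gq G).card := Finset.card_pos.mpr ⟨[], nil_mem_Gq hG⟩
  unfold Hfun
  rw [prod_split hG h1, ff_one hG, ← hmq]
  have := arith (T1 G).card (Gq G).card hm hq
  set P1 := ∏ x ∈ (T1 G).erase ([] : Vertex), ff (T1 G) x
  set P2 := ∏ x ∈ (Gq G).erase ([] : Vertex), ff (Gq G) x
  rw [show (T1 G).card + (Gq G).card - 2 = (T1 G).card + (Gq G).card - 2 from rfl]
  calc (Nat.factorial ((T1 G).card + (Gq G).card - 2) : ℝ) *
        (((max ((T1 G).card - 1) 1 : ℕ) : ℝ)⁻¹ * ((max ((Gq G).card - 1) 1 : ℕ) : ℝ)⁻¹ * P1 * P2)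
      = ((Nat.factorial ((T1 G).card + (Gq G).card - 2) : ℝ) *
          ((max ((T1 G).card - 1) 1 : ℕ) : ℝ)⁻¹ * ((max ((Gq G).card - 1) 1 : ℕ) : ℝ)⁻¹) * P1 * P2 := by
        ring
    _ = ((Nat.choose ((T1 G).card + (Gq G).card - 2) ((T1 G).card - 1) : ℝ) *
          (Nat.factorial ((T1 G).card - 2) : ℝ) * (Nat.factorial ((Gq G).card - 2) : ℝ)) * P1 * P2 := by
        rw [this]
    _ = _ := by ring

end CH

namespace CH

variable {G : Finset Vertex}

/-- vertices that can be removed (no children, no later siblings) -/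
def removables (G : Finset Vertex) : Finset Vertex :=
  G.filter fun x => x ≠ [] ∧ x ++ [1] ∉ G ∧ x.dropLast ++ [x.getLastD 0 + 1] ∉ G

lemma mem_removables {x : Vertex} :
    x ∈ removables G ↔ x ∈ G ∧ x ≠ [] ∧ x ++ [1] ∉ G ∧
      x.dropLast ++ [x.getLastD 0 + 1] ∉ G := by
  rw [removables, Finset.mem_filter]

lemma erase_isROTree (hG : IsROTree G) {x : Vertex} (hx : x ∈ removables G) :
    IsROTree (G.erase x) := by
  rw [mem_removables] at hx
  obtain ⟨hxG, hxne, hnc, hns⟩ := hx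
  constructor
  · rw [Finset.mem_erase]
    exact ⟨fun h => hxne h.symm, hG.1⟩
  · intro y hy hyne
    rw [Finset.mem_erase] at hy
    obtain ⟨hyx, hyG⟩ := hy
    obtain ⟨h1, h2, h3⟩ := hG.2 y hyG hyne
    refine ⟨h1, ?_, ?_⟩
    · rw [Finset.mem_erase]
      refine ⟨?_, h2⟩
      intro hpar
      apply hnc
      have : y = x ++ [y.getLastD 0] := by rw [← hpar, concat_self hyne]
      rw [this] at hyG
      exact sib_mem hG hyG 1 le_rfl h1
    · intro hlt
      rw [Finset.mem_erase]
      refine ⟨?_, h3 hlt⟩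
      intro heq
      apply hns
      have hd : x.dropLast = y.dropLast := by rw [← heq, List.dropLast_concat]
      have hl : x.getLastD 0 = y.getLastD 0 - 1 := by rw [← heq, getLastD_concat]
      rw [hd, hl, show y.getLastD 0 - 1 + 1 = y.getLastD 0 by omega, concat_self hyne]
      exact hyG

lemma removable_of_erase (hG : IsROTree G) {x : Vertex} (hxG : x ∈ G) (hxne : x ≠ [])
    (h : IsROTree (G.erase x)) : x ∈ removables G := by
  rw [mem_removables]
  refine ⟨hxG, hxne, ?_, ?_⟩
  · intro hc
    have hmem : x ++ [1] ∈ G.erase x := by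
      rw [Finset.mem_erase]
      exact ⟨by simp, hc⟩
    have := (h.2 _ hmem (by simp)).2.1
    rw [List.dropLast_concat, Finset.mem_erase] at this
    exact this.1 rfl
  · intro hs
    have hxl : 1 ≤ x.getLastD 0 := (hG.2 x hxG hxne).1
    have hne : x.dropLast ++ [x.getLastD 0 + 1] ≠ x := by
      intro heq
      have := getLastD_concat x.dropLast (x.getLastD 0 + 1)
      rw [heq] at this
      omega
    have hmem : x.dropLast ++ [x.getLastD 0 + 1] ∈ G.erase x := by
      rw [Finset.mem_erase]; exact ⟨hne, hs⟩
    have h3 := (h.2 _ hmem (by simp)).2.2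
    rw [getLastD_concat, List.dropLast_concat] at h3
    have := h3 (by omega)
    rw [show x.getLastD 0 + 1 - 1 = x.getLastD 0 by omega, concat_self hxne,
      Finset.mem_erase] at this
    exact this.1 rfl

lemma one_not_removable (hG : IsROTree G) (h3 : 3 ≤ G.card) : [1] ∉ removables G := by
  rw [mem_removables]
  rintro ⟨-, -, hnc, hns⟩
  have hmq := card_T1_add_card_Gq hG
  have hm : 1 ≤ (T1 G).card := Finset.card_pos.mpr ⟨[], nil_mem_T1 (one_mem hG (by omega))⟩
  have hq : 1 ≤ (Gq G).card := Finset.card_pos.mpr ⟨[], nil_mem_Gq hG⟩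
  rcases le_or_gt 2 (T1 G).card with hm2 | hm2
  · have hT : IsROTree (T1 G) := T1_isROTree hG (one_mem hG (by omega))
    have := one_mem hT hm2
    rw [mem_T1] at this
    exact hnc this
  · have hq2 : 2 ≤ (Gq G).card := by omega
    have hQ : IsROTree (Gq G) := Gq_isROTree hG
    have := one_mem hQ hq2
    rw [cons_mem_Gq hG le_rfl] at this
    exact hns (by simpa using this)

lemma removable_cons_one {y : Vertex} (hy : y ≠ []) :
    1 :: y ∈ removables G ↔ y ∈ removables (T1 G) := by
  rw [mem_removables, mem_removables, mem_T1]
  have e1 : (1 :: y) ++ [1] = 1 :: (y ++ [1]) := rfl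
  have e2 : (1 :: y).dropLast ++ [(1 :: y).getLastD 0 + 1]
      = 1 :: (y.dropLast ++ [y.getLastD 0 + 1]) := by
    rw [dropLast_cons' 1 hy, getLastD_cons 1 hy]
    rfl
  rw [e1, e2, ← mem_T1 (G := G) (z := y ++ [1]),
    ← mem_T1 (G := G) (z := y.dropLast ++ [y.getLastD 0 + 1])]
  simp [hy]

lemma removable_inc (hG : IsROTree G) {z : Vertex} (hz : z ∈ Gq G) (hzne : z ≠ []) :
    inc z ∈ removables G ↔ z ∈ removables (Gq G) := by
  obtain ⟨j, t, rfl, hj, hmem⟩ := mem_Gq_shape hG hz hzne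
  rw [mem_removables, mem_removables]
  have hiz : inc (j :: t) = (j + 1) :: t := rfl
  rw [hiz]
  have ha : ((j + 1) :: t ∈ G) ↔ (j :: t ∈ Gq G) := (cons_mem_Gq hG hj).symm
  have hb : ((j + 1) :: t ++ [1] ∈ G) ↔ (j :: t ++ [1] ∈ Gq G) := by
    rw [show (j + 1) :: t ++ [1] = (j+1) :: (t ++ [1]) from rfl,
      show j :: t ++ [1] = j :: (t ++ [1]) from rfl, cons_mem_Gq hG hj]
  have hc : (((j + 1) :: t).dropLast ++ [((j + 1) :: t).getLastD 0 + 1] ∈ G)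
      ↔ ((j :: t).dropLast ++ [(j :: t).getLastD 0 + 1] ∈ Gq G) := by
    cases t using List.reverseRecOn with
    | nil =>
      show ([j + 1 + 1] ∈ G) ↔ ([j + 1] ∈ Gq G)
      rw [cons_mem_Gq hG (by omega)]
    | append_singleton r a _ =>
      have hrne : (r ++ [a] : List ℕ) ≠ [] := by simp
      rw [dropLast_cons' (j+1) hrne, dropLast_cons' j hrne,
        getLastD_cons (j+1) hrne, getLastD_cons j hrne,
        show (j+1) :: (r ++ [a]).dropLast ++ [(r ++ [a]).getLastD 0 + 1]
          = (j+1) :: ((r ++ [a]).dropLast ++ [(r ++ [a]).getLastD 0 + 1]) from rfl,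
        show j :: (r ++ [a]).dropLast ++ [(r ++ [a]).getLastD 0 + 1]
          = j :: ((r ++ [a]).dropLast ++ [(r ++ [a]).getLastD 0 + 1]) from rfl,
        cons_mem_Gq hG hj]
  rw [ha, hb, hc]
  simp

lemma removables_decomp (hG : IsROTree G) (h3 : 3 ≤ G.card) :
    removables G = ((removables (T1 G)).image (1 :: ·))
      ∪ ((removables (Gq G)).image inc) := by
  ext x
  simp only [Finset.mem_union, Finset.mem_image]
  constructor
  · intro hx
    have hxG : x ∈ G := (mem_removables.mp hx).1
    have hxne : x ≠ [] := (mem_removables.mp hx).2.1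
    cases x with
    | nil => exact absurd rfl hxne
    | cons k t =>
      have hk : 1 ≤ k := head_pos hG hxG (by simp)
      rcases eq_or_ne k 1 with rfl | hk1
      · -- in the cone
        left
        have htne : t ≠ [] := by
          rintro rfl
          exact one_not_removable hG h3 hx
        exact ⟨t, (removable_cons_one htne).mp hx, rfl⟩
      · right
        refine ⟨(k - 1) :: t, ?_, ?_⟩
        · have hmem : (k - 1) :: t ∈ Gq G := by
            rw [cons_mem_Gq hG (by omega), show k - 1 + 1 = k by omega]
            exact hxG
          rw [← removable_inc hG hmem (by simp)]
          rwa [show inc ((k-1) :: t) = k :: t by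
            show (k - 1 + 1) :: t = k :: t
            rw [show k - 1 + 1 = k by omega]]
        · show inc _ = _
          show (k - 1 + 1) :: t = k :: t
          rw [show k - 1 + 1 = k by omega]
  · rintro (⟨y, hy, rfl⟩ | ⟨z, hz, rfl⟩)
    · have hyne : y ≠ [] := (mem_removables.mp hy).2.1
      exact (removable_cons_one hyne).mpr hy
    · have hzq : z ∈ Gq G := (mem_removables.mp hz).1
      have hzne : z ≠ [] := (mem_removables.mp hz).2.1
      exact (removable_inc hG hzq hzne).mpr hz

end CH

namespace CH

variable {G : Finset Vertex}

lemma dec_injOn (hG : IsROTree G) :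
    Set.InjOn dec (G.filter fun y => ¬ [1] <+: y) := by
  intro a ha b hb hab
  simp only [Finset.coe_filter, Set.mem_setOf_eq] at ha hb
  cases a with
  | nil => cases b with
    | nil => rfl
    | cons j r =>
      have hj : 1 ≤ j := head_pos hG hb.1 (by simp)
      simp [dec] at hab
  | cons k t =>
    have hk : 1 ≤ k := head_pos hG ha.1 (by simp)
    have hk1 : k ≠ 1 := fun h => ha.2 (h ▸ by simp [List.cons_prefix_cons])
    cases b with
    | nil => simp [dec] at hab
    | cons j r =>
      have hj : 1 ≤ j := head_pos hG hb.1 (by simp)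
      have hj1 : j ≠ 1 := fun h => hb.2 (h ▸ by simp [List.cons_prefix_cons])
      simp only [dec, List.cons.injEq] at hab
      obtain ⟨h1, rfl⟩ := hab
      have : k = j := by omega
      rw [this]

lemma T1_erase_cone {y : Vertex} : T1 (G.erase (1 :: y)) = (T1 G).erase y := by
  ext z
  rw [mem_T1, Finset.mem_erase, Finset.mem_erase, mem_T1]
  simp

lemma Gq_erase_cone {x : Vertex} (hx : [1] <+: x) : Gq (G.erase x) = Gq G := by
  unfold Gq
  congr 1
  ext y
  simp only [Finset.mem_filter, Finset.mem_erase]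
  constructor
  · rintro ⟨⟨-, hyG⟩, hp⟩; exact ⟨hyG, hp⟩
  · rintro ⟨hyG, hp⟩
    refine ⟨⟨?_, hyG⟩, hp⟩
    rintro rfl
    exact hp hx

lemma T1_erase_noncone {x : Vertex} (hx : ¬ [1] <+: x) : T1 (G.erase x) = T1 G := by
  ext z
  rw [mem_T1, Finset.mem_erase, mem_T1]
  constructor
  · rintro ⟨-, h⟩; exact h
  · intro h
    refine ⟨?_, h⟩
    rintro rfl
    exact hx (by simp [List.cons_prefix_cons])

lemma Gq_erase_noncone (hG : IsROTree G) {z : Vertex} (hz : z ∈ Gq G) (hzne : z ≠ []) :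
    Gq (G.erase (inc z)) = (Gq G).erase z := by
  obtain ⟨j, t, rfl, hj, hmem⟩ := mem_Gq_shape hG hz hzne
  have hv : inc (j :: t) = (j+1) :: t := rfl
  have hvfil : ((j+1) :: t) ∈ G.filter fun y => ¬ [1] <+: y := by
    rw [Finset.mem_filter]
    exact ⟨hmem, not_one_prefix (by omega)⟩
  have hdecv : dec ((j+1) :: t) = j :: t := by
    show (j + 1 - 1) :: t = j :: t
    norm_num
  have hfil : (G.erase ((j+1) :: t)).filter (fun y => ¬ [1] <+: y)
      = (G.filter fun y => ¬ [1] <+: y).erase ((j+1) :: t) := by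
    ext w
    simp only [Finset.mem_filter, Finset.mem_erase]
    tauto
  rw [Gq, hv, hfil]
  ext w
  simp only [Finset.mem_image, Finset.mem_erase]
  constructor
  · rintro ⟨u, hu, rfl⟩
    refine ⟨?_, ?_⟩
    · intro heq
      apply hu.1
      apply dec_injOn hG (by simpa using hu.2) (by simpa using hvfil)
      rw [hdecv, heq]
    · show dec u ∈ Gq G
      rw [Gq]
      exact Finset.mem_image_of_mem dec hu.2
  · rintro ⟨hwz, hw⟩
    rw [Gq, Finset.mem_image] at hw
    obtain ⟨u, hu, rfl⟩ := hw
    refine ⟨u, ⟨?_, hu⟩, rfl⟩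
    rintro rfl
    exact hwz hdecv

lemma Hfun_singleton : Hfun {([] : Vertex)} = 1 := by
  unfold Hfun
  rw [Finset.erase_singleton]
  simp

lemma singleton_of_card_one (h1 : ([] : Vertex) ∈ G) (hc : G.card = 1) :
    G = {([] : Vertex)} := by
  obtain ⟨a, ha⟩ := Finset.card_eq_one.mp hc
  subst ha
  rw [Finset.mem_singleton] at h1
  rw [h1]

lemma removables_subset_ne : ∀ x ∈ removables G, x ≠ [] :=
  fun _ hx => (mem_removables.mp hx).2.1

lemma removables_empty_of_singleton : removables {([] : Vertex)} = ∅ := by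
  ext x
  simp only [Finset.notMem_empty, iff_false, mem_removables, Finset.mem_singleton]
  rintro ⟨rfl, hne, -⟩
  exact hne rfl

/-- Lemma R : the leaf-removal recursion for the formula -/
lemma lemR : ∀ n : ℕ, ∀ G : Finset Vertex, G.card = n → IsROTree G → 2 ≤ G.card →
    ∑ x ∈ removables G, Hfun (G.erase x) = Hfun G := by
  intro n
  induction n using Nat.strong_induction_on with
  | _ n IH =>
    intro G hn hG h2
    have h1 : [1] ∈ G := one_mem hG h2
    have hmq : (T1 G).card + (Gq G).card = G.card := card_T1_add_card_Gq hG
    have hm : 1 ≤ (T1 G).card := Finset.card_pos.mpr ⟨[], nil_mem_T1 h1⟩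
    have hq : 1 ≤ (Gq G).card := Finset.card_pos.mpr ⟨[], nil_mem_Gq hG⟩
    have hT : IsROTree (T1 G) := T1_isROTree hG h1
    have hQ : IsROTree (Gq G) := Gq_isROTree hG
    rcases eq_or_lt_of_le h2 with h2' | h3
    · -- base case : G.card = 2
      have hm1 : (T1 G).card = 1 := by omega
      have hq1 : (Gq G).card = 1 := by omega
      have hTs : T1 G = {([] : Vertex)} := singleton_of_card_one (nil_mem_T1 h1) hm1
      have hQs : Gq G = {([] : Vertex)} := singleton_of_card_one (nil_mem_Gq hG) hq1
      have hHG : Hfun G = 1 := by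
        rw [lemS hG h2, hm1, hTs, hQs, Hfun_singleton, ← h2']
        norm_num
      -- removables G = {[1]}
      have hsub : ({([] : Vertex), [1]} : Finset Vertex) ⊆ G := by
        intro w hw
        simp only [Finset.mem_insert, Finset.mem_singleton] at hw
        rcases hw with rfl | rfl
        · exact hG.1
        · exact h1
      have hcard2 : ({([] : Vertex), [1]} : Finset Vertex).card = 2 := by
        rw [Finset.card_insert_of_notMem (by simp), Finset.card_singleton]
      have hGeq : G = {([] : Vertex), [1]} :=
        (Finset.eq_of_subset_of_card_le hsub (by omega)).symm
      have hrem : removables G = {[1]} := by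
        ext x
        rw [mem_removables]
        simp only [Finset.mem_singleton]
        constructor
        · rintro ⟨hxG, hxne, -, -⟩
          rw [hGeq] at hxG
          simp only [Finset.mem_insert, Finset.mem_singleton] at hxG
          rcases hxG with rfl | rfl
          · exact absurd rfl hxne
          · rfl
        · rintro rfl
          refine ⟨h1, by simp, ?_, ?_⟩
          · rw [hGeq]; simp
          · rw [hGeq]
            show ([2] : Vertex) ∉ _
            simp
      rw [hrem, Finset.sum_singleton, hHG]
      have : G.erase [1] = {([] : Vertex)} := by
        apply singleton_of_card_one
        · rw [Finset.mem_erase]; exact ⟨by simp, hG.1⟩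
        · rw [Finset.card_erase_of_mem h1]; omega
      rw [this, Hfun_singleton]
    · -- inductive case : 3 ≤ G.card
      have h3' : 3 ≤ n := by omega
      rw [removables_decomp hG (by omega)]
      have hdisj : Disjoint ((removables (T1 G)).image (1 :: ·))
          ((removables (Gq G)).image inc) := by
        rw [Finset.disjoint_left]
        rintro x hx1 hx2
        rw [Finset.mem_image] at hx1 hx2
        obtain ⟨y, hy, rfl⟩ := hx1
        obtain ⟨z, hz, hzeq⟩ := hx2
        have hzq : z ∈ Gq G := (mem_removables.mp hz).1
        have hzne : z ≠ [] := (mem_removables.mp hz).2.1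
        obtain ⟨j, t, rfl, hj, -⟩ := mem_Gq_shape hG hzq hzne
        have : (j + 1) :: t = 1 :: y := hzeq
        simp only [List.cons.injEq] at this
        omega
      rw [Finset.sum_union hdisj,
        Finset.sum_image (fun a _ b _ h => cons_injective 1 h),
        Finset.sum_image (fun a _ b _ h => inc_injective h)]
      -- first sum
      have hsum1 : ∑ y ∈ removables (T1 G), Hfun (G.erase (1 :: y))
          = (Nat.choose (n - 3) ((T1 G).card - 2) : ℝ) * Hfun (Gq G)
              * ∑ y ∈ removables (T1 G), Hfun ((T1 G).erase y) := by
        rw [Finset.mul_sum]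
        apply Finset.sum_congr rfl
        intro y hy
        have hyne : y ≠ [] := removables_subset_ne y hy
        have hyT : y ∈ T1 G := (mem_removables.mp hy).1
        have hrem : 1 :: y ∈ removables G := (removable_cons_one hyne).mpr hy
        have hmemG : 1 :: y ∈ G := (mem_removables.mp hrem).1
        have htree : IsROTree (G.erase (1 :: y)) := erase_isROTree hG hrem
        have hcard : (G.erase (1 :: y)).card = n - 1 := by
          rw [Finset.card_erase_of_mem hmemG, hn]
        rw [lemS htree (by omega), T1_erase_cone,
          Gq_erase_cone (by simp [List.cons_prefix_cons])]
        rw [hcard, Finset.card_erase_of_mem hyT]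
        rw [show n - 1 - 2 = n - 3 by omega,
          show (T1 G).card - 1 - 1 = (T1 G).card - 2 by omega]
        ring
      have hsum2 : ∑ z ∈ removables (Gq G), Hfun (G.erase (inc z))
          = (Nat.choose (n - 3) ((T1 G).card - 1) : ℝ) * Hfun (T1 G)
              * ∑ z ∈ removables (Gq G), Hfun ((Gq G).erase z) := by
        rw [Finset.mul_sum]
        apply Finset.sum_congr rfl
        intro z hz
        have hzne : z ≠ [] := removables_subset_ne z hz
        have hzq : z ∈ Gq G := (mem_removables.mp hz).1
        have hrem : inc z ∈ removables G := (removable_inc hG hzq hzne).mpr hz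
        have hmemG : inc z ∈ G := (mem_removables.mp hrem).1
        have htree : IsROTree (G.erase (inc z)) := erase_isROTree hG hrem
        have hcard : (G.erase (inc z)).card = n - 1 := by
          rw [Finset.card_erase_of_mem hmemG, hn]
        have hnp : ¬ [1] <+: inc z := by
          obtain ⟨j, t, rfl, hj, -⟩ := mem_Gq_shape hG hzq hzne
          exact not_one_prefix (show j + 1 ≠ 1 by omega)
        rw [lemS htree (by omega), T1_erase_noncone hnp, Gq_erase_noncone hG hzq hzne]
        rw [hcard, show n - 1 - 2 = n - 3 by omega]
      rw [hsum1, hsum2]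
      -- apply inner induction hypotheses / degenerate cases
      rcases eq_or_lt_of_le hm with hm1 | hm2
      · -- (T1 G).card = 1
        have hTs : T1 G = {([] : Vertex)} := singleton_of_card_one (nil_mem_T1 h1) hm1.symm
        have hq2 : 2 ≤ (Gq G).card := by omega
        have hrT : removables (T1 G) = ∅ := by rw [hTs]; exact removables_empty_of_singleton
        have hIH : ∑ z ∈ removables (Gq G), Hfun ((Gq G).erase z) = Hfun (Gq G) :=
          IH (Gq G).card (by omega) (Gq G) rfl hQ hq2
        rw [hrT, hIH, Finset.sum_empty, mul_zero, zero_add]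
        rw [lemS hG h2, hn, ← hm1, hTs, Hfun_singleton]
        norm_num
      · -- 2 ≤ (T1 G).card
        have hIH1 : ∑ y ∈ removables (T1 G), Hfun ((T1 G).erase y) = Hfun (T1 G) :=
          IH (T1 G).card (by omega) (T1 G) rfl hT hm2
        rcases eq_or_lt_of_le hq with hq1 | hq2
        · -- (Gq G).card = 1
          have hQs : Gq G = {([] : Vertex)} := singleton_of_card_one (nil_mem_Gq hG) hq1.symm
          have hrQ : removables (Gq G) = ∅ := by rw [hQs]; exact removables_empty_of_singleton
          rw [hrQ, hIH1, Finset.sum_empty, mul_zero, add_zero]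
          rw [lemS hG h2, hn, hQs, Hfun_singleton]
          have e1 : (T1 G).card - 2 = n - 3 := by omega
          have e2 : (T1 G).card - 1 = n - 2 := by omega
          rw [e1, e2, Nat.choose_self, Nat.choose_self]
          ring
        · -- both ≥ 2
          have hIH2 : ∑ z ∈ removables (Gq G), Hfun ((Gq G).erase z) = Hfun (Gq G) :=
            IH (Gq G).card (by omega) (Gq G) rfl hQ hq2
          rw [hIH1, hIH2, lemS hG h2, hn]
          have hpascal : Nat.choose (n - 2) ((T1 G).card - 1)
              = Nat.choose (n - 3) ((T1 G).card - 2) + Nat.choose (n - 3) ((T1 G).card - 1) := by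
            have e1 : n - 2 = (n - 3) + 1 := by omega
            have e2 : (T1 G).card - 1 = ((T1 G).card - 2) + 1 := by omega
            rw [e1, e2, Nat.choose_succ_succ, Nat.succ_eq_add_one, ← e2]
          rw [hpascal]
          push_cast
          ring

end CH

namespace CH

variable {G : Finset Vertex}

lemma hist_length {s : List Vertex} (hs : s ∈ Hist G) : s.length = G.card := by
  rw [← hs.2.1, List.toFinset_card_of_nodup hs.1]

lemma hist_finite (G : Finset Vertex) : (Hist G).Finite := by
  apply Set.Finite.subset (G.toList.permutations.toFinset).finite_toSet
  intro s hs
  rw [Finset.mem_coe, List.mem_toFinset, List.mem_permutations]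
  have h1 : List.Perm s.dedup G.toList.dedup := List.toFinset_eq_iff_perm_dedup.mp
    (by rw [hs.2.1, Finset.toList_toFinset])
  rwa [List.Nodup.dedup hs.1, List.Nodup.dedup G.nodup_toList] at h1

lemma hist_head {a : Vertex} {t : List Vertex} (hs : (a :: t) ∈ Hist G) : a = [] := by
  have h0 := hs.2.2 0 (by simp)
  have : ((a :: t).take 1).toFinset = {a} := by simp
  rw [this] at h0
  have := h0.1
  rw [Finset.mem_singleton] at this
  exact this.symm

lemma hist_toFinset_dropLast {s : List Vertex} (hs : s ∈ Hist G) (hne : s ≠ []) :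
    s.dropLast.toFinset = G.erase (s.getLast hne) := by
  have hsplit : s.dropLast ++ [s.getLast hne] = s := List.dropLast_append_getLast hne
  have hnodup := hs.1
  rw [← hsplit] at hnodup
  rw [List.nodup_append] at hnodup
  have hxnot : s.getLast hne ∉ s.dropLast := by
    intro hmem
    exact hnodup.2.2 _ hmem _ (by simp) rfl
  ext w
  rw [Finset.mem_erase, ← hs.2.1, List.mem_toFinset, List.mem_toFinset]
  constructor
  · intro hw
    constructor
    · rintro rfl; exact hxnot hw
    · rw [← hsplit]; exact List.mem_append_left _ hw
  · rintro ⟨hwx, hw⟩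
    rw [← hsplit, List.mem_append] at hw
    rcases hw with hw | hw
    · exact hw
    · simp only [List.mem_singleton] at hw
      exact absurd hw hwx

lemma hist_getLast_removable (hG : IsROTree G) (h2 : 2 ≤ G.card) {s : List Vertex}
    (hs : s ∈ Hist G) (hne : s ≠ []) : s.getLast hne ∈ removables G := by
  have hlen : s.length = G.card := hist_length hs
  apply removable_of_erase hG
  · rw [← hs.2.1, List.mem_toFinset]
    exact List.getLast_mem hne
  · -- getLast ≠ []
    cases s with
    | nil => exact absurd rfl hne
    | cons a t =>
      have ha : a = [] := hist_head hs
      have htne : t ≠ [] := by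
        intro h; subst h; simp at hlen; omega
      rw [List.getLast_cons htne]
      intro hcon
      have hmem : t.getLast htne ∈ t := List.getLast_mem htne
      rw [hcon, ← ha] at hmem
      have := hs.1
      rw [List.nodup_cons] at this
      exact this.1 (ha ▸ hmem)
  · -- erase is a tree
    rw [← hist_toFinset_dropLast hs hne]
    have hi := hs.2.2 (s.length - 2) (by omega)
    rw [show s.length - 2 + 1 = s.length - 1 by omega, ← List.dropLast_eq_take] at hi
    exact hi

lemma hist_dropLast (h2 : 2 ≤ G.card) {s : List Vertex} (hs : s ∈ Hist G) (hne : s ≠ []) :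
    s.dropLast ∈ Hist (G.erase (s.getLast hne)) := by
  have hlen : s.length = G.card := hist_length hs
  refine ⟨hs.1.sublist (List.dropLast_sublist s), hist_toFinset_dropLast hs hne, ?_⟩
  intro i hi
  rw [List.length_dropLast] at hi
  have htake : s.dropLast.take (i + 1) = s.take (i + 1) := by
    rw [List.dropLast_eq_take, List.take_take]
    congr 1
    omega
  rw [htake]
  exact hs.2.2 i (by omega)

lemma hist_append (hG : IsROTree G) {x : Vertex} (hx : x ∈ removables G)
    {s' : List Vertex} (hs' : s' ∈ Hist (G.erase x)) : s' ++ [x] ∈ Hist G := by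
  have hxG : x ∈ G := (mem_removables.mp hx).1
  have hxnot : x ∉ s' := by
    intro h
    have : x ∈ G.erase x := by
      rw [← hs'.2.1, List.mem_toFinset]; exact h
    rw [Finset.mem_erase] at this
    exact this.1 rfl
  refine ⟨?_, ?_, ?_⟩
  · rw [List.nodup_append]
    exact ⟨hs'.1, by simp, by
        intro a ha b hb; simp only [List.mem_singleton] at hb; subst hb; rintro rfl; exact hxnot ha⟩
  · rw [List.toFinset_append]
    simp only [List.toFinset_cons, List.toFinset_nil, LawfulSingleton.insert_empty_eq]
    rw [hs'.2.1, Finset.union_comm, ← Finset.insert_eq, Finset.insert_erase hxG]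
  · intro i hi
    rw [List.length_append, List.length_singleton] at hi
    rcases lt_or_ge i s'.length with hlt | hge
    · rw [List.take_append_of_le_length (by omega)]
      exact hs'.2.2 i hlt
    · have : i = s'.length := by omega
      subst this
      rw [List.take_of_length_le (by simp)]
      have : (s' ++ [x]).toFinset = G := by
        rw [List.toFinset_append]
        simp only [List.toFinset_cons, List.toFinset_nil, LawfulSingleton.insert_empty_eq]
        rw [hs'.2.1, Finset.union_comm, ← Finset.insert_eq, Finset.insert_erase hxG]
      rw [this]
      exact hG

lemma card_hist_rec (hG : IsROTree G) (h2 : 2 ≤ G.card) :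
    Nat.card ↥(Hist G) = ∑ x ∈ removables G, Nat.card ↥(Hist (G.erase x)) := by
  classical
  set F : (Σ x : {x // x ∈ removables G}, ↥(Hist (G.erase x.1))) → ↥(Hist G) :=
    fun p => ⟨p.2.1 ++ [p.1.1], hist_append hG p.1.2 p.2.2⟩ with hF
  have hinj : Function.Injective F := by
    rintro ⟨⟨x, hx⟩, ⟨s', hs'⟩⟩ ⟨⟨y, hy⟩, ⟨t', ht'⟩⟩ heq
    simp only [hF, Subtype.mk.injEq] at heq
    have hlen : s'.length = t'.length := by
      rw [hist_length hs', hist_length ht',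
        Finset.card_erase_of_mem (mem_removables.mp hx).1,
        Finset.card_erase_of_mem (mem_removables.mp hy).1]
    obtain ⟨h1, h2'⟩ := List.append_inj heq hlen
    have hxy : x = y := by simpa using h2'
    subst hxy
    subst h1
    rfl
  have hsurj : Function.Surjective F := by
    rintro ⟨s, hs⟩
    have hne : s ≠ [] := by
      intro h
      have := hist_length hs
      rw [h] at this
      simp at this
      omega
    refine ⟨⟨⟨s.getLast hne, hist_getLast_removable hG h2 hs hne⟩,
      ⟨s.dropLast, hist_dropLast h2 hs hne⟩⟩, ?_⟩
    simp only [hF, Subtype.mk.injEq]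
    exact List.dropLast_append_getLast hne
  have hcardeq : Nat.card (Σ x : {x // x ∈ removables G}, ↥(Hist (G.erase x.1)))
      = Nat.card ↥(Hist G) := Nat.card_eq_of_bijective F ⟨hinj, hsurj⟩
  rw [← hcardeq]
  letI : ∀ x : {x // x ∈ removables G}, Fintype ↥(Hist (G.erase x.1)) :=
    fun x => (hist_finite _).fintype
  rw [Nat.card_eq_fintype_card, Fintype.card_sigma]
  rw [← Finset.sum_coe_sort (removables G) (fun x => Nat.card ↥(Hist (G.erase x)))]
  apply Finset.sum_congr rfl
  intro x _
  rw [Nat.card_eq_fintype_card]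

lemma hist_singleton_root : Hist {([] : Vertex)} = {[([] : Vertex)]} := by
  ext s
  constructor
  · intro hs
    have hlen : s.length = 1 := by
      rw [hist_length hs, Finset.card_singleton]
    obtain ⟨a, rfl⟩ := List.length_eq_one_iff.mp hlen
    have : a ∈ ({([] : Vertex)} : Finset Vertex) := by
      rw [← hs.2.1, List.mem_toFinset]; simp
    rw [Finset.mem_singleton] at this
    subst this
    rfl
  · rintro rfl
    refine ⟨by simp, by simp, ?_⟩
    intro i hi
    simp only [List.length_singleton] at hi
    have : i = 0 := by omega
    subst this
    have htake : ([([] : Vertex)] : List Vertex).take 1 = [([] : Vertex)] := rfl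
    rw [htake]
    constructor
    · simp
    · intro y hy hyne
      simp only [List.toFinset_cons, List.toFinset_nil, LawfulSingleton.insert_empty_eq,
        Finset.mem_singleton] at hy
      exact absurd hy hyne

/-- the main induction -/
lemma main_count : ∀ n : ℕ, ∀ G : Finset Vertex, G.card = n → IsROTree G →
    (Nat.card ↥(Hist G) : ℝ) = Hfun G := by
  intro n
  induction n using Nat.strong_induction_on with
  | _ n IH =>
    intro G hn hG
    have h1 : 1 ≤ G.card := Finset.card_pos.mpr ⟨[], hG.1⟩
    rcases eq_or_lt_of_le h1 with h1' | h2
    · -- singleton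
      have hGs : G = {([] : Vertex)} := singleton_of_card_one hG.1 h1'.symm
      subst hGs
      rw [hist_singleton_root, Hfun_singleton]
      rw [Nat.card_coe_set_eq, Set.ncard_singleton]
      norm_num
    · have h2' : 2 ≤ G.card := h2
      rw [card_hist_rec hG h2']
      push_cast
      rw [← lemR n G hn hG h2']
      apply Finset.sum_congr rfl
      intro x hx
      have hxG : x ∈ G := (mem_removables.mp hx).1
      exact IH (G.card - 1) (by omega) (G.erase x)
        (by rw [Finset.card_erase_of_mem hxG]) (erase_isROTree hG hx)

end CH


/-- The number of historical orderings of a tree `G` with `|G| > 1` is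
`|HIST(G)| = (|G|−2)! Π_{x∈G, x≠∅} a(x)⁻¹ b(x)⁻¹`, where
`a(x) = max(|G↓x|−1, 1)` and `b(x) = max(Σ_{y∈B(x)} |G↓y|, 1)`. -/
theorem card_hist (G : Finset Vertex) (hG : IsROTree G) (hcard : 1 < G.card) :
    (Nat.card ↥(Hist G) : ℝ) =
      (Nat.factorial (G.card - 2) : ℝ) *
        ∏ x ∈ G.erase ([] : Vertex),
          ((max ((subtreeAt G x).card - 1) 1 : ℕ) : ℝ)⁻¹ *
            ((max (∑ y ∈ laterSiblings G x, (subtreeAt G y).card) 1 : ℕ) : ℝ)⁻¹ := by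
  rw [CH.main_count G.card G rfl hG]
  rfl
end

section
/- Let β > 0 and consider the linear weight function w(k) = k + β. Then ρ̂(λ) = β/(λ−1) for λ > 1 and ρ̂(λ) = ∞ for 0 < λ ≤ 1; hence λ̲ = 1, condition (M) holds, and the Malthusian parameter is λ* = 1 + β. -/
open scoped Classical BigOperators ENNReal

open Finset Filter

noncomputable def cterm (beta lam : ℝ) (k : ℕ) : ℝ :=
  ∏ i ∈ Finset.range (k + 1), ((i : ℝ) + beta) / (lam + ((i : ℝ) + beta))

noncomputable def Qprod (beta lam : ℝ) (n : ℕ) : ℝ :=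
  ∏ i ∈ Finset.range n, ((i : ℝ) + 1 + beta) / (lam + (i : ℝ) + beta)

lemma Qprod_pos {beta lam : ℝ} (hb : 0 < beta) (hl : 0 < lam) (n : ℕ) :
    0 < Qprod beta lam n := by
  refine Finset.prod_pos fun i _ => div_pos (by positivity) (by positivity)

lemma cterm_eq {beta lam : ℝ} (n : ℕ) :
    cterm beta lam n = beta / (lam + (n : ℝ) + beta) * Qprod beta lam n := by
  induction n with
  | zero => simp [cterm, Qprod]
  | succ n ih =>
    simp only [cterm, Qprod, Finset.prod_range_succ] at ih ⊢
    rw [ih]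
    push_cast
    ring

lemma partial_sum_eq {beta lam : ℝ} (hb : 0 < beta) (hl : 1 < lam) (n : ℕ) :
    ∑ k ∈ Finset.range n, cterm beta lam k
      = beta / (lam - 1) * (1 - Qprod beta lam n) := by
  induction n with
  | zero => simp [Qprod]
  | succ n ih =>
    rw [Finset.sum_range_succ, ih, cterm_eq]
    simp only [Qprod, Finset.prod_range_succ]
    have h1 : (lam + (n : ℝ) + beta) ≠ 0 := by positivity
    have h2 : lam - 1 ≠ 0 := by linarith
    field_simp
    ring

lemma Qprod_tendsto {beta lam : ℝ} (hb : 0 < beta) (hl : 1 < lam) :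
    Filter.Tendsto (Qprod beta lam) Filter.atTop (nhds 0) := by
  set c : ℝ := (lam - 1) / (lam + beta) with hc
  have hcpos : 0 < c := div_pos (by linarith) (by linarith)
  have hQexp : ∀ n, Qprod beta lam n
      = Real.exp (∑ i ∈ Finset.range n, Real.log (((i : ℝ) + 1 + beta) / (lam + (i : ℝ) + beta))) := by
    intro n
    rw [Real.exp_sum]
    refine Finset.prod_congr rfl fun i _ => ?_
    rw [Real.exp_log (div_pos (by positivity) (by positivity))]
  have hlog : ∀ i : ℕ, Real.log (((i : ℝ) + 1 + beta) / (lam + (i : ℝ) + beta))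
      ≤ -(c * (1 / ((i : ℝ) + 1))) := by
    intro i
    have hd : (0:ℝ) < lam + (i : ℝ) + beta := by positivity
    have h1 : Real.log (((i : ℝ) + 1 + beta) / (lam + (i : ℝ) + beta))
        ≤ ((i : ℝ) + 1 + beta) / (lam + (i : ℝ) + beta) - 1 :=
      Real.log_le_sub_one_of_pos (div_pos (by positivity) hd)
    have h2 : ((i : ℝ) + 1 + beta) / (lam + (i : ℝ) + beta) - 1
        = -((lam - 1) / (lam + (i : ℝ) + beta)) := by
      field_simp
      ring
    rw [h2] at h1
    refine h1.trans (neg_le_neg ?_)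
    rw [hc, div_mul_eq_mul_div, mul_one_div, div_div]
    refine div_le_div_of_nonneg_left (by linarith) hd ?_
    nlinarith [Nat.cast_nonneg (α := ℝ) i]
  have hH := Real.tendsto_sum_range_one_div_nat_succ_atTop
  have hcH : Filter.Tendsto (fun n => -(c * ∑ i ∈ Finset.range n, (1 / ((i : ℝ) + 1))))
      Filter.atTop Filter.atBot := by
    refine Filter.tendsto_neg_atBot_iff.mpr ?_
    exact (Filter.tendsto_const_mul_atTop_of_pos hcpos).mpr hH
  have hL : Filter.Tendsto
      (fun n => ∑ i ∈ Finset.range n, Real.log (((i : ℝ) + 1 + beta) / (lam + (i : ℝ) + beta)))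
      Filter.atTop Filter.atBot := by
    refine Filter.tendsto_atBot_mono (fun n => ?_) hcH
    rw [Finset.mul_sum, ← Finset.sum_neg_distrib]
    exact Finset.sum_le_sum fun i _ => hlog i
  have := Real.tendsto_exp_atBot.comp hL
  refine this.congr fun n => (hQexp n).symm

lemma lapRho_linear_eq_iSup {beta lam : ℝ} (hb : 0 < beta) (hl : 0 < lam) :
    lapRho (fun k => (k : ℝ) + beta) lam
      = ⨆ n : ℕ, ENNReal.ofReal (∑ k ∈ Finset.range n, cterm beta lam k) := by
  have hterm : ∀ k : ℕ,
      (∏ i ∈ Finset.range (k + 1),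
        ENNReal.ofReal (((i : ℝ) + beta) / (lam + ((i : ℝ) + beta))))
      = ENNReal.ofReal (cterm beta lam k) := by
    intro k
    rw [cterm, ENNReal.ofReal_prod_of_nonneg]
    intro i _
    have : (0:ℝ) < lam + ((i:ℝ) + beta) := by positivity
    positivity
  rw [lapRho]
  simp only [hterm]
  rw [ENNReal.tsum_eq_iSup_nat]
  refine iSup_congr fun n => ?_
  rw [ENNReal.ofReal_sum_of_nonneg]
  intro k _
  rw [cterm]
  refine Finset.prod_nonneg fun i _ => ?_
  have : (0:ℝ) < lam + ((i:ℝ) + beta) := by positivity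
  positivity

lemma sum_cterm_nonneg {beta lam : ℝ} (hb : 0 < beta) (hl : 0 < lam) :
    Monotone (fun n => ∑ k ∈ Finset.range n, cterm beta lam k) := by
  refine monotone_nat_of_le_succ fun n => ?_
  rw [Finset.sum_range_succ]
  have : 0 ≤ cterm beta lam n := by
    rw [cterm]
    refine Finset.prod_nonneg fun i _ => ?_
    have : (0:ℝ) < lam + ((i:ℝ) + beta) := by positivity
    positivity
  linarith

lemma lapRho_linear_gt_one {beta lam : ℝ} (hb : 0 < beta) (hl : 1 < lam) :
    lapRho (fun k => (k : ℝ) + beta) lam = ENNReal.ofReal (beta / (lam - 1)) := by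
  rw [lapRho_linear_eq_iSup hb (by linarith)]
  refine iSup_eq_of_tendsto ?_ ?_
  · exact fun a b hab =>
      ENNReal.ofReal_le_ofReal (sum_cterm_nonneg hb (by linarith) hab)
  · have h1 : Filter.Tendsto (fun n => ∑ k ∈ Finset.range n, cterm beta lam k)
        Filter.atTop (nhds (beta / (lam - 1))) := by
      have h2 : Filter.Tendsto (fun n => beta / (lam - 1) * (1 - Qprod beta lam n))
          Filter.atTop (nhds (beta / (lam - 1) * (1 - 0))) :=
        (tendsto_const_nhds.sub (Qprod_tendsto hb hl)).const_mul _
      rw [sub_zero, mul_one] at h2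
      exact h2.congr fun n => (partial_sum_eq hb hl n).symm
    exact (ENNReal.continuous_ofReal.tendsto _).comp h1

lemma cterm_lower {beta lam : ℝ} (hb : 0 < beta) (hl : 0 < lam) (hle : lam ≤ 1) (k : ℕ) :
    beta / (1 + beta) * (1 / ((k : ℝ) + 1)) ≤ cterm beta lam k := by
  have h1 : cterm beta 1 k = beta / (1 + (k : ℝ) + beta) := by
    rw [cterm_eq]
    have : Qprod beta 1 k = 1 := by
      rw [Qprod]
      refine Finset.prod_eq_one fun i _ => ?_
      have he : (1:ℝ) + (i:ℝ) + beta = (i:ℝ) + 1 + beta := by ring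
      rw [he]
      exact div_self (by positivity)
    rw [this, mul_one]
  have h2 : cterm beta 1 k ≤ cterm beta lam k := by
    rw [cterm, cterm]
    refine Finset.prod_le_prod (fun i _ => ?_) (fun i _ => ?_)
    · have : (0:ℝ) < 1 + ((i:ℝ) + beta) := by positivity
      positivity
    · have hd : (0:ℝ) < lam + ((i:ℝ) + beta) := by positivity
      gcongr
  refine le_trans ?_ (h1 ▸ h2)
  rw [div_mul_div_comm, mul_one]
  have hk : (0:ℝ) < 1 + (k : ℝ) + beta := by positivity
  gcongr
  nlinarith [Nat.cast_nonneg (α := ℝ) k]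

lemma lapRho_linear_le_one {beta lam : ℝ} (hb : 0 < beta) (hl : 0 < lam) (hle : lam ≤ 1) :
    lapRho (fun k => (k : ℝ) + beta) lam = ∞ := by
  rw [lapRho_linear_eq_iSup hb hl]
  refine iSup_eq_of_tendsto ?_ ?_
  · exact fun a b hab => ENNReal.ofReal_le_ofReal (sum_cterm_nonneg hb hl hab)
  · refine ENNReal.tendsto_ofReal_atTop.comp ?_
    refine Filter.tendsto_atTop_mono (fun n => ?_)
      ((Filter.tendsto_const_mul_atTop_of_pos
        (show (0:ℝ) < beta / (1 + beta) by positivity)).mpr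
        Real.tendsto_sum_range_one_div_nat_succ_atTop)
    rw [Finset.mul_sum]
    exact Finset.sum_le_sum fun k _ => by
      simpa using cterm_lower hb hl hle k


/-- For the linear weight function `w(k) = k + β` (`β > 0`):
`ρ̂(λ) = β/(λ−1)` for `λ > 1`, `ρ̂(λ) = ∞` for `0 < λ ≤ 1`, hence `λ̲ = 1`,
condition (M) holds, and the Malthusian parameter is `λ* = 1 + β`. -/
theorem linear_weight_malthusian (beta : ℝ) (hbeta : 0 < beta) :
    (∀ lam : ℝ, 1 < lam →
      lapRho (fun k => (k : ℝ) + beta) lam = ENNReal.ofReal (beta / (lam - 1))) ∧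
    (∀ lam : ℝ, 0 < lam → lam ≤ 1 →
      lapRho (fun k => (k : ℝ) + beta) lam = ∞) ∧
    lowerLam (fun k => (k : ℝ) + beta) = 1 ∧
    CondM (fun k => (k : ℝ) + beta) ∧
    lowerLam (fun k => (k : ℝ) + beta) < 1 + beta ∧
    lapRho (fun k => (k : ℝ) + beta) (1 + beta) = 1 := by
  have hset : {lam : ℝ | 0 < lam ∧ lapRho (fun k => (k : ℝ) + beta) lam ≠ ∞}
      = Set.Ioi 1 := by
    ext lam
    simp only [Set.mem_setOf_eq, Set.mem_Ioi]
    constructor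
    · rintro ⟨h0, hfin⟩
      by_contra hle
      exact hfin (lapRho_linear_le_one hbeta h0 (le_of_not_gt hle))
    · intro h1
      exact ⟨by linarith, by
        rw [lapRho_linear_gt_one hbeta h1]; exact ENNReal.ofReal_ne_top⟩
  have hlow : lowerLam (fun k => (k : ℝ) + beta) = 1 := by
    rw [lowerLam, hset]
    exact csInf_Ioi
  have hfinal : lapRho (fun k => (k : ℝ) + beta) (1 + beta) = 1 := by
    rw [lapRho_linear_gt_one hbeta (by linarith)]
    have : (1 : ℝ) + beta - 1 = beta := by ring
    rw [this, div_self (ne_of_gt hbeta), ENNReal.ofReal_one]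
  refine ⟨fun lam hl => lapRho_linear_gt_one hbeta hl,
    fun lam h0 h1 => lapRho_linear_le_one hbeta h0 h1, hlow, ⟨?_, ?_⟩, by linarith, hfinal⟩
  · refine ⟨2, ?_⟩
    rw [hset]
    simp
  · rw [hlow]
    have hmem : (1 + beta / 2 : ℝ) ∈ Set.Ioi (1 : ℝ) := by
      simp only [Set.mem_Ioi]; linarith
    have hval : lapRho (fun k => (k : ℝ) + beta) (1 + beta / 2)
        = ENNReal.ofReal 2 := by
      rw [lapRho_linear_gt_one hbeta (by linarith : (1:ℝ) < 1 + beta / 2)]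
      congr 1
      rw [show (1 : ℝ) + beta / 2 - 1 = beta / 2 by ring]
      rw [div_div_eq_mul_div, mul_comm, mul_div_assoc, div_self (ne_of_gt hbeta), mul_one]
    calc (1 : ℝ≥0∞) < ENNReal.ofReal 2 := by
          rw [show ((1:ℝ≥0∞)) = ENNReal.ofReal 1 by simp]
          exact (ENNReal.ofReal_lt_ofReal_iff (by norm_num)).mpr one_lt_two
      _ = lapRho (fun k => (k : ℝ) + beta) (1 + beta / 2) := hval.symm
      _ ≤ ⨆ lam ∈ Set.Ioi (1 : ℝ), lapRho (fun k => (k : ℝ) + beta) lam :=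
          le_iSup₂ (f := fun lam _ => lapRho (fun k => (k : ℝ) + beta) lam)
            (1 + beta / 2) hmem
end

section
/- Let β > 0 and w(k) = k + β, so that λ* = 1 + β. Then the asymptotic degree distribution p_w(k) = (λ*/(λ*+w(k))) Π_{i=0}^{k−1} w(i)/(λ*+w(i)) satisfies p_w(k) = (1+β) · (k−1+β)^{(k)} / (k+1+2β)^{(k+1)} for all k ∈ ℕ, where x^{(k)} = x(x−1)⋯(x−k+1) = Γ(x+1)/Γ(x−k+1) denotes the falling factorial. In particular, for β = 1: p_w(k) = 4/((k+1)(k+2)(k+3)). -/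
open scoped Classical BigOperators ENNReal

/-- the falling factorial `x^{(k)} = x(x−1)⋯(x−k+1)` -/
noncomputable def fallFac (x : ℝ) (k : ℕ) : ℝ := ∏ i ∈ Finset.range k, (x - i)

private lemma pW_linear_form (beta : ℝ) (k : ℕ) :
    pW (fun n => (n : ℝ) + beta) (1 + beta) k =
      (1 + beta) / ((k : ℝ) + 1 + 2 * beta) *
        ∏ i ∈ Finset.range k, ((i : ℝ) + beta) / ((i : ℝ) + 1 + 2 * beta) := by
  unfold pW
  congr 1
  · ring_nf
  · exact Finset.prod_congr rfl fun i _ => by ring_nf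

private lemma fall_one (beta : ℝ) (k : ℕ) :
    fallFac ((k : ℝ) - 1 + beta) k = ∏ i ∈ Finset.range k, ((i : ℝ) + beta) := by
  unfold fallFac
  rw [← Finset.prod_range_reflect]
  refine Finset.prod_congr rfl fun i hi => ?_
  rw [Finset.mem_range] at hi
  have h1 : k - 1 - i = k - 1 - i := rfl
  have : ((k - 1 - i : ℕ) : ℝ) = (k : ℝ) - 1 - i := by
    have : i ≤ k - 1 := Nat.le_sub_one_of_lt hi
    push_cast [Nat.sub_sub, Nat.cast_sub (by omega : 1 + i ≤ k)]
    ring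
  rw [this]; ring

private lemma fall_two (beta : ℝ) (k : ℕ) :
    fallFac ((k : ℝ) + 1 + 2 * beta) (k + 1) =
      ∏ i ∈ Finset.range (k + 1), ((i : ℝ) + 1 + 2 * beta) := by
  unfold fallFac
  rw [← Finset.prod_range_reflect]
  refine Finset.prod_congr rfl fun i hi => ?_
  rw [Finset.mem_range] at hi
  have : ((k + 1 - 1 - i : ℕ) : ℝ) = (k : ℝ) - i := by
    have h : k + 1 - 1 - i = k - i := by omega
    rw [h, Nat.cast_sub (by omega : i ≤ k)]
  rw [this]; ring

private lemma prod_ratio_one (k : ℕ) :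
    ∏ i ∈ Finset.range k, ((i : ℝ) + 1) / ((i : ℝ) + 3) =
      2 / (((k : ℝ) + 1) * ((k : ℝ) + 2)) := by
  induction k with
  | zero => norm_num
  | succ n ih =>
      rw [Finset.prod_range_succ, ih]
      have h1 : ((n : ℝ) + 1) ≠ 0 := by positivity
      have h2 : ((n : ℝ) + 2) ≠ 0 := by positivity
      have h3 : ((n : ℝ) + 3) ≠ 0 := by positivity
      push_cast
      field_simp
      ring

/-- For the linear weight `w(k) = k + β` with Malthusian parameter
`λ* = 1 + β`, the asymptotic degree distribution is
`p_w(k) = (1+β)(k−1+β)^{(k)}/(k+1+2β)^{(k+1)}`; in particular for `β = 1`,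
`p_w(k) = 4/((k+1)(k+2)(k+3))`. -/
theorem linear_degree_distribution (beta : ℝ) (hbeta : 0 < beta) :
    (∀ k : ℕ, pW (fun n => (n : ℝ) + beta) (1 + beta) k =
      (1 + beta) * fallFac ((k : ℝ) - 1 + beta) k /
        fallFac ((k : ℝ) + 1 + 2 * beta) (k + 1)) ∧
    (∀ k : ℕ, pW (fun n => (n : ℝ) + 1) 2 k =
      4 / (((k : ℝ) + 1) * ((k : ℝ) + 2) * ((k : ℝ) + 3))) := by
  have hmain : ∀ k : ℕ, pW (fun n => (n : ℝ) + beta) (1 + beta) k =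
      (1 + beta) * fallFac ((k : ℝ) - 1 + beta) k /
        fallFac ((k : ℝ) + 1 + 2 * beta) (k + 1) := by
    intro k
    have hne : ∀ i ∈ Finset.range (k + 1), ((i : ℝ) + 1 + 2 * beta) ≠ 0 := by
      intro i _; positivity
    have hprodne : (∏ i ∈ Finset.range (k + 1), ((i : ℝ) + 1 + 2 * beta)) ≠ 0 :=
      Finset.prod_ne_zero_iff.mpr hne
    have hkne : ((k : ℝ) + 1 + 2 * beta) ≠ 0 := by positivity
    have hprodne' : (∏ i ∈ Finset.range k, ((i : ℝ) + 1 + 2 * beta)) ≠ 0 :=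
      Finset.prod_ne_zero_iff.mpr (fun i _ => by positivity)
    rw [pW_linear_form, fall_one, fall_two, Finset.prod_range_succ,
      Finset.prod_div_distrib]
    field_simp
  constructor
  · exact hmain
  · intro k
    have h2 : (2 : ℝ) = 1 + 1 := by norm_num
    have := pW_linear_form 1 k
    have hp : ∏ i ∈ Finset.range k, ((i : ℝ) + 1) / ((i : ℝ) + 1 + 2 * 1) =
        2 / (((k : ℝ) + 1) * ((k : ℝ) + 2)) := by
      rw [← prod_ratio_one k]
      exact Finset.prod_congr rfl fun i _ => by norm_num [add_assoc]
    rw [h2, this, hp]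
    have h1 : ((k : ℝ) + 1) ≠ 0 := by positivity
    have h2 : ((k : ℝ) + 2) ≠ 0 := by positivity
    have h3 : ((k : ℝ) + 3) ≠ 0 := by positivity
    field_simp
    ring
end

section
/- Let β > 0 and w(k) = k + β, so that λ* = 1 + β. Then for every G ∈ 𝒢 with |G| = n + 1, π_w(G) = Σ_{s∈HIST(G)} (λ*/(λ*+W(G))) Π_{i=0}^{n−1} w(G,s,i+1)/(λ*+W(G,s,i)) admits the closed form π_w(G) = |HIST(G)| · (Π_{x∈G} (deg(x,G)−1+β)^{(deg(x,G))}) / ((1+β)^n · (n+2−(1+β)^{−1})^{(n+1)}), where x^{(k)} = Γ(x+1)/Γ(x−k+1) is the falling factorial. In particular, for β = 1: π_w(G) = (2 |HIST(G)| / (2|G|+1)!!) · Π_{x∈G} deg(x,G)!. -/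
open scoped Classical BigOperators ENNReal

lemma sum_degree {G : Finset Vertex} (hG : IsROTree G) :
    ∑ x ∈ G, degree x G = G.card - 1 := by
  have h1 : ∑ x ∈ G, degree x G = (G.filter (fun y => y ≠ ([] : Vertex))).card := by
    rw [Finset.card_eq_sum_card_fiberwise
      (f := fun y : Vertex => y.dropLast) (t := G) ?_]
    · apply Finset.sum_congr rfl
      intro x _
      unfold degree
      rw [Finset.filter_filter]
    · intro y hy
      rw [Finset.mem_coe, Finset.mem_filter] at hy
      exact (hG.2 y hy.1 hy.2).2.1
  rw [h1, Finset.filter_ne', Finset.card_erase_of_mem hG.1]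

lemma degree_insert (v : Vertex) (T : Finset Vertex) (hv : v ∉ T) (x : Vertex) :
    degree x (insert v T) = degree x T + if v ≠ ([] : Vertex) ∧ v.dropLast = x then 1 else 0 := by
  unfold degree
  rw [Finset.filter_insert]
  split_ifs with h
  · rw [Finset.card_insert_of_notMem (fun hc => hv (Finset.mem_filter.mp hc).1)]
  · simp

lemma dropLast_ne {v : Vertex} (hv : v ≠ []) : v.dropLast ≠ v := by
  intro h
  have h1 := congrArg List.length h
  rw [List.length_dropLast] at h1
  have h0 : v.length ≠ 0 := fun h0 => hv (List.length_eq_zero_iff.mp h0)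
  omega

lemma take_succ_toFinset (s : List Vertex) (i : ℕ) (hi : i < s.length) :
    (s.take (i+1)).toFinset = insert (s.getD i []) (s.take i).toFinset := by
  rw [List.take_succ, List.getD_eq_getElem s [] hi, List.getElem?_eq_getElem hi]
  rw [Option.toList_some, List.toFinset_append, Finset.union_comm]
  simp

lemma getD_not_mem_take (s : List Vertex) (i : ℕ) (hi : i < s.length) (hn : s.Nodup) :
    s.getD i [] ∉ (s.take i).toFinset := by
  intro hmem
  rw [List.mem_toFinset] at hmem
  have h2 : (s.take (i+1)).Nodup := hn.sublist (List.take_sublist _ _)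
  rw [List.take_succ, List.getElem?_eq_getElem hi, Option.toList_some, List.nodup_append] at h2
  exact h2.2.2 _ hmem _ (List.mem_singleton_self _) (List.getD_eq_getElem s [] hi)

lemma degree_zero_of_not_mem_parents {T : Finset Vertex} (hT : IsROTree T)
    {v : Vertex} (hv : v ∉ T) : degree v (insert v T) = 0 := by
  unfold degree
  rw [Finset.card_eq_zero, Finset.filter_eq_empty_iff]
  intro y hy
  rintro ⟨hy1, hy2⟩
  rcases Finset.mem_insert.mp hy with rfl | hyT
  · exact dropLast_ne hy1 hy2
  · exact hv (hy2 ▸ (hT.2 y hyT hy1).2.1)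

/-- The product of the weights along a history is independent of the history. -/

lemma hist_prod (beta : ℝ) {G : Finset Vertex} {s : List Vertex} (hs : s ∈ Hist G)
    (i : ℕ) (hi : i < s.length) :
    ∏ j ∈ Finset.range i, histw (fun k => (k : ℝ) + beta) s (j + 1)
      = ∏ x ∈ (s.take (i+1)).toFinset,
          ∏ c ∈ Finset.range (degree x (s.take (i+1)).toFinset), ((c : ℝ) + beta) := by
  obtain ⟨hnd, hfin, htree⟩ := hs
  induction i with
  | zero =>
    rw [Finset.range_zero, Finset.prod_empty]
    have h0 : 0 < s.length := by omega
    rw [take_succ_toFinset s 0 h0]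
    have : (s.take 0).toFinset = (∅ : Finset Vertex) := by simp
    rw [this]
    rw [show insert (s.getD 0 []) (∅ : Finset Vertex) = {s.getD 0 []} from rfl, Finset.prod_singleton]
    have hdeg : degree (s.getD 0 []) {s.getD 0 []} = 0 := by
      unfold degree
      rw [Finset.card_eq_zero, Finset.filter_eq_empty_iff]
      intro y hy
      rintro ⟨hy1, hy2⟩
      rcases Finset.mem_singleton.mp hy with rfl
      exact dropLast_ne hy1 hy2
    rw [hdeg, Finset.range_zero, Finset.prod_empty]
  | succ i ih =>
    have hi' : i < s.length := by omega
    set T := (s.take (i+1)).toFinset with hTdef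
    set v := s.getD (i+1) [] with hvdef
    have hins : (s.take (i+2)).toFinset = insert v T := take_succ_toFinset s (i+1) hi
    have hvT : v ∉ T := getD_not_mem_take s (i+1) hi hnd
    have htreeT : IsROTree T := htree i hi'
    have htreeT' : IsROTree (insert v T) := hins ▸ htree (i+1) hi
    have hvne : v ≠ [] := fun h => hvT (h ▸ htreeT.1)
    have hp : v.dropLast ∈ T := by
      have h1 : v ∈ insert v T := Finset.mem_insert_self v T
      have h2 := (htreeT'.2 v h1 hvne).2.1
      rcases Finset.mem_insert.mp h2 with h3 | h3
      · exact absurd h3 (dropLast_ne hvne)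
      · exact h3
    have hdv : degree v (insert v T) = 0 := degree_zero_of_not_mem_parents htreeT hvT
    rw [Finset.prod_range_succ, ih hi', hins]
    rw [Finset.prod_insert hvT, hdv, Finset.range_zero, Finset.prod_empty, one_mul]
    have hdeg : ∀ x ∈ T, degree x (insert v T)
        = degree x T + if v.dropLast = x then 1 else 0 := by
      intro x _
      rw [degree_insert v T hvT x]
      congr 1
      simp [hvne]
    have hw : histw (fun k => (k : ℝ) + beta) s (i + 1)
        = (degree v.dropLast T : ℝ) + beta := rfl
    rw [hw]
    rw [← Finset.mul_prod_erase T _ hp, ← Finset.mul_prod_erase T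
      (fun x => ∏ c ∈ Finset.range (degree x (insert v T)), ((c : ℝ) + beta)) hp]
    have he : ∀ x ∈ T.erase v.dropLast,
        ∏ c ∈ Finset.range (degree x (insert v T)), ((c : ℝ) + beta)
          = ∏ c ∈ Finset.range (degree x T), ((c : ℝ) + beta) := by
      intro x hx
      have hxm := Finset.mem_erase.mp hx
      rw [hdeg x hxm.2, if_neg (Ne.symm hxm.1), add_zero]
    rw [Finset.prod_congr rfl he]
    rw [hdeg v.dropLast hp, if_pos rfl, Finset.prod_range_succ]
    ring

lemma totalWeight_linear (beta : ℝ) {T : Finset Vertex} (hT : IsROTree T) :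
    totalWeight (fun k => (k : ℝ) + beta) T = (T.card - 1 : ℕ) + beta * T.card := by
  unfold totalWeight
  rw [Finset.sum_add_distrib, Finset.sum_const, nsmul_eq_mul, mul_comm]
  rw [← Nat.cast_sum, sum_degree hT]

lemma histW_linear (beta : ℝ) {G : Finset Vertex} {s : List Vertex} (hs : s ∈ Hist G)
    (i : ℕ) (hi : i < s.length) :
    histW (fun k => (k : ℝ) + beta) s i = (i : ℝ) + beta * (i + 1) := by
  obtain ⟨hnd, hfin, htree⟩ := hs
  have htreeT : IsROTree (s.take (i+1)).toFinset := htree i hi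
  have hcard : (s.take (i+1)).toFinset.card = i + 1 := by
    rw [List.toFinset_card_of_nodup (hnd.sublist (List.take_sublist _ _))]
    rw [List.length_take]
    omega
  unfold histW
  rw [totalWeight_linear beta htreeT, hcard]
  push_cast
  ring

lemma hist_finite (G : Finset Vertex) : (Hist G).Finite := by
  apply Set.Finite.subset (Finset.finite_toSet (G.toList.permutations.toFinset))
  intro s hs
  obtain ⟨hnd, hfin, -⟩ := hs
  simp only [Finset.coe_insert, Finset.mem_coe, List.mem_toFinset, List.mem_permutations]
  rw [← List.dedup_eq_self.mpr hnd, ← List.dedup_eq_self.mpr G.nodup_toList]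
  rw [← List.toFinset_eq_iff_perm_dedup, hfin, Finset.toList_toFinset]

lemma piW_linear (beta : ℝ) {G : Finset Vertex} (hG : IsROTree G) {n : ℕ}
    (hcard : G.card = n + 1) :
    piW (fun k => (k : ℝ) + beta) (1 + beta) G =
      (Nat.card ↥(Hist G) : ℝ) *
        ((1 + beta) * (∏ x ∈ G, ∏ c ∈ Finset.range (degree x G), ((c : ℝ) + beta)) /
          ∏ i ∈ Finset.range (n + 1), (((i : ℝ) + 1) * (1 + beta) + beta)) := by
  set lam : ℝ := 1 + beta with hlam
  set C : ℝ := lam * (∏ x ∈ G, ∏ c ∈ Finset.range (degree x G), ((c : ℝ) + beta)) /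
      ∏ i ∈ Finset.range (n + 1), (((i : ℝ) + 1) * lam + beta) with hC
  have hfin := hist_finite G
  have key : ∀ s ∈ Hist G,
      lam / (lam + totalWeight (fun k => (k : ℝ) + beta) G) *
        ∏ i ∈ Finset.range (G.card - 1),
          histw (fun k => (k : ℝ) + beta) s (i + 1) /
            (lam + histW (fun k => (k : ℝ) + beta) s i) = C := by
    intro s hs
    have hlen : s.length = n + 1 := by
      rw [← hs.2.1] at hcard
      rw [← List.toFinset_card_of_nodup hs.1, hcard]
    have htakeG : (s.take (n + 1)).toFinset = G := by
      rw [← hlen, List.take_length, hs.2.1]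
    have hnum : ∏ i ∈ Finset.range n, histw (fun k => (k : ℝ) + beta) s (i + 1)
        = ∏ x ∈ G, ∏ c ∈ Finset.range (degree x G), ((c : ℝ) + beta) := by
      rw [hist_prod beta hs n (by omega), htakeG]
    have hden : ∏ i ∈ Finset.range n,
        (lam + histW (fun k => (k : ℝ) + beta) s i)
        = ∏ i ∈ Finset.range n, (((i : ℝ) + 1) * lam + beta) := by
      apply Finset.prod_congr rfl
      intro i hi
      rw [histW_linear beta hs i (by rw [hlen]; exact lt_of_lt_of_le (Finset.mem_range.mp hi) (by omega))]
      rw [hlam]; ring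
    have hWG : totalWeight (fun k => (k : ℝ) + beta) G = (n : ℝ) + beta * (n + 1) := by
      rw [totalWeight_linear beta hG, hcard]
      push_cast
      ring
    rw [hcard, Nat.add_sub_cancel, Finset.prod_div_distrib, hnum, hden, hWG]
    rw [hC, div_mul_div_comm, Finset.prod_range_succ]
    congr 1
    rw [hlam]; ring
  rw [piW, finsum_mem_eq_finite_toFinset_sum _ hfin,
    Finset.sum_congr rfl (fun s hs => key s (hfin.mem_toFinset.mp hs)),
    Finset.sum_const, nsmul_eq_mul]
  congr 2
  rw [Nat.card_coe_set_eq, Set.ncard_eq_toFinset_card _ hfin]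

lemma fallFac_shift (beta : ℝ) (d : ℕ) :
    fallFac ((d : ℝ) - 1 + beta) d = ∏ c ∈ Finset.range d, ((c : ℝ) + beta) := by
  rw [← Finset.prod_range_reflect (fun c => (c : ℝ) + beta) d]
  unfold fallFac
  apply Finset.prod_congr rfl
  intro j hj
  have hjd := Finset.mem_range.mp hj
  have : ((d - 1 - j : ℕ) : ℝ) = (d : ℝ) - 1 - j := by
    have h1 : 1 + j ≤ d := by omega
    push_cast [Nat.sub_sub, Nat.cast_sub h1]
    ring
  rw [this]
  ring

lemma den_fallFac (beta : ℝ) (hbeta : 0 < beta) (n : ℕ) :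
    ∏ i ∈ Finset.range (n + 1), (((i : ℝ) + 1) * (1 + beta) + beta)
      = (1 + beta) ^ (n + 1) * fallFac ((n : ℝ) + 2 - (1 + beta)⁻¹) (n + 1) := by
  have hlam : (1 + beta) ≠ 0 := by positivity
  have h1 : fallFac ((n : ℝ) + 2 - (1 + beta)⁻¹) (n + 1)
      = ∏ i ∈ Finset.range (n + 1), ((i : ℝ) + 2 - (1 + beta)⁻¹) := by
    rw [← Finset.prod_range_reflect (fun i => (i : ℝ) + 2 - (1 + beta)⁻¹) (n + 1)]
    unfold fallFac
    apply Finset.prod_congr rfl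
    intro j hj
    have hjd := Finset.mem_range.mp hj
    have : ((n + 1 - 1 - j : ℕ) : ℝ) = (n : ℝ) - j := by
      have h1 : j ≤ n := by omega
      push_cast [Nat.add_sub_cancel, Nat.cast_sub h1]
      ring
    rw [this]
    ring
  have h2 : ((1 : ℝ) + beta) ^ (n + 1) = ∏ _i ∈ Finset.range (n + 1), (1 + beta) := by
    rw [Finset.prod_const, Finset.card_range]
  rw [h1, h2, ← Finset.prod_mul_distrib]
  apply Finset.prod_congr rfl
  intro i _
  rw [mul_sub, mul_inv_cancel₀ hlam]
  ring

lemma prod_odd_doubleFactorial (m : ℕ) :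
    ∏ i ∈ Finset.range m, (((i : ℝ) + 1) * (1 + 1) + 1)
      = (Nat.doubleFactorial (2 * m + 1) : ℝ) := by
  induction m with
  | zero => simp [Nat.doubleFactorial]
  | succ m ih =>
    rw [Finset.prod_range_succ, ih]
    have h : 2 * (m + 1) + 1 = (2 * m + 1) + 2 := by omega
    rw [h, Nat.doubleFactorial_add_two]
    push_cast
    ring

lemma prod_factorial (d : ℕ) :
    ∏ c ∈ Finset.range d, ((c : ℝ) + 1) = (Nat.factorial d : ℝ) := by
  induction d with
  | zero => simp
  | succ d ih =>
    rw [Finset.prod_range_succ, ih, Nat.factorial_succ]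
    push_cast
    ring

/-- For the linear weight `w(k) = k + β` with Malthusian parameter
`λ* = 1 + β` and a tree `G` with `|G| = n + 1`:
`π_w(G) = |HIST(G)| · Π_{x∈G}(deg(x)−1+β)^{(deg(x))} /
  ((1+β)^n (n+2−(1+β)⁻¹)^{(n+1)})`; in particular for `β = 1`,
`π_w(G) = (2|HIST(G)|/(2|G|+1)!!) Π_{x∈G} deg(x)!`. -/
theorem linear_subtree_distribution (beta : ℝ) (hbeta : 0 < beta)
    (G : Finset Vertex) (hG : IsROTree G) (n : ℕ) (hcard : G.card = n + 1) :
    piW (fun k => (k : ℝ) + beta) (1 + beta) G =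
        (Nat.card ↥(Hist G) : ℝ) *
          (∏ x ∈ G, fallFac ((degree x G : ℝ) - 1 + beta) (degree x G)) /
          ((1 + beta) ^ n * fallFac ((n : ℝ) + 2 - (1 + beta)⁻¹) (n + 1)) ∧
    piW (fun k => (k : ℝ) + 1) 2 G =
        2 * (Nat.card ↥(Hist G) : ℝ) /
            (Nat.doubleFactorial (2 * G.card + 1) : ℝ) *
          ∏ x ∈ G, (Nat.factorial (degree x G) : ℝ) := by
  have hlam0 : (1 : ℝ) + beta ≠ 0 := by positivity
  constructor
  · rw [piW_linear beta hG hcard, den_fallFac beta hbeta n]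
    have hP : (∏ x ∈ G, ∏ c ∈ Finset.range (degree x G), ((c : ℝ) + beta))
        = ∏ x ∈ G, fallFac ((degree x G : ℝ) - 1 + beta) (degree x G) :=
      Finset.prod_congr rfl fun x _ => (fallFac_shift beta _).symm
    rw [hP, pow_succ', mul_assoc, mul_div_mul_left _ _ hlam0, mul_div_assoc]
  · rw [show (2 : ℝ) = 1 + 1 by norm_num, piW_linear 1 hG hcard,
      prod_odd_doubleFactorial (n + 1), hcard]
    have hP : (∏ x ∈ G, ∏ c ∈ Finset.range (degree x G), ((c : ℝ) + 1))
        = ∏ x ∈ G, (Nat.factorial (degree x G) : ℝ) :=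
      Finset.prod_congr rfl fun x _ => prod_factorial _
    rw [hP]
    ring
end
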